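/- arXiv:1003.0502 — 4 statements merged into one kernel-verified Lean document; each statement's English description precedes it below -/
import Mathlib

section
/- Let f_1, …, f_k ∈ ℂ[z_1,…,z_d], fix a monomial order, and suppose that for each j, writing f_j = ∑_α c_α z^α with leading term c_β z^β, we have |c_β| > ∑_{α ≠ β} |c_α|. Normalize so that all leading coefficients are 1, and let ρ ∈ (0,1) be such that for all j the sum of absolute values of non-leading coefficients of f_j is at most ρ. Then every polynomial h admits a decomposition h = ∑_{i=1}^k a_i f_i + r with polynomials a_i and remainder r such that ∑_{i=1}^k ‖a_i‖ ≤ (1−ρ)^{-1} ‖h‖ and ‖r‖ ≤ ‖h‖, where ‖·‖ is the ℓ¹ norm on coefficients, and no term of r is divisible by any leading term LT(f_j). -/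
open MvPolynomial Finset

noncomputable section

/-- The ℓ¹ norm of a polynomial: the sum of absolute values of its coefficients. -/
def l1 {d : ℕ} (p : MvPolynomial (Fin d) ℂ) : ℝ :=
  ∑ α ∈ p.support, ‖p.coeff α‖

/-- total degree |α| of a multi-index -/
def mdeg {d : ℕ} (α : Fin d →₀ ℕ) : ℕ := α.sum fun _ n => n

/-- Drury–Arveson weight  α!/|α|! -/
def daW {d : ℕ} (α : Fin d →₀ ℕ) : ℝ :=
  (∏ i, Nat.factorial (α i)) / Nat.factorial (mdeg α)

/-- Drury–Arveson inner product on polynomials -/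
def daInner {d : ℕ} (p q : MvPolynomial (Fin d) ℂ) : ℂ :=
  ∑ α ∈ p.support ∪ q.support, (starRingEnd ℂ) (p.coeff α) * q.coeff α * (daW α : ℂ)

/-- Drury–Arveson squared norm -/
def daNormSq {d : ℕ} (p : MvPolynomial (Fin d) ℂ) : ℝ :=
  ∑ α ∈ p.support, ‖p.coeff α‖ ^ 2 * daW α

/-- vector valued versions -/
def vInner {d r : ℕ} (p q : Fin r → MvPolynomial (Fin d) ℂ) : ℂ := ∑ t, daInner (p t) (q t)

def vNormSq {d r : ℕ} (p : Fin r → MvPolynomial (Fin d) ℂ) : ℝ := ∑ t, daNormSq (p t)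

def vNorm {d r : ℕ} (p : Fin r → MvPolynomial (Fin d) ℂ) : ℝ := Real.sqrt (vNormSq p)

def vHomog {d r : ℕ} (p : Fin r → MvPolynomial (Fin d) ℂ) (n : ℕ) : Prop :=
  ∀ t, (p t).IsHomogeneous n



lemma l1_nonneg {d : ℕ} (p : MvPolynomial (Fin d) ℂ) : 0 ≤ l1 p :=
  Finset.sum_nonneg fun _ _ => norm_nonneg _

lemma l1_zero {d : ℕ} : l1 (0 : MvPolynomial (Fin d) ℂ) = 0 := by
  simp [l1]

lemma l1_eq_sum_of_subset {d : ℕ} (p : MvPolynomial (Fin d) ℂ) {S : Finset (Fin d →₀ ℕ)}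
    (hS : p.support ⊆ S) : l1 p = ∑ α ∈ S, ‖p.coeff α‖ := by
  refine Finset.sum_subset hS fun α _ hα => ?_
  simp [MvPolynomial.notMem_support_iff.mp hα]

lemma l1_add_le {d : ℕ} (p q : MvPolynomial (Fin d) ℂ) : l1 (p + q) ≤ l1 p + l1 q := by
  rw [l1_eq_sum_of_subset (p + q) (MvPolynomial.support_add (p := p) (q := q)),
    l1_eq_sum_of_subset p (Finset.subset_union_left),
    l1_eq_sum_of_subset q (Finset.subset_union_right), ← Finset.sum_add_distrib]
  refine Finset.sum_le_sum fun α _ => ?_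
  simpa [MvPolynomial.coeff_add] using norm_add_le _ _

lemma l1_neg {d : ℕ} (p : MvPolynomial (Fin d) ℂ) : l1 (-p) = l1 p := by
  simp [l1, MvPolynomial.support_neg]

lemma l1_sub_le {d : ℕ} (p q : MvPolynomial (Fin d) ℂ) : l1 (p - q) ≤ l1 p + l1 q := by
  rw [sub_eq_add_neg]
  simpa [l1_neg] using l1_add_le p (-q)

lemma l1_monomial_le {d : ℕ} (γ : Fin d →₀ ℕ) (c : ℂ) :
    l1 (MvPolynomial.monomial γ c) ≤ ‖c‖ := by
  rcases eq_or_ne c 0 with rfl | hc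
  · simp [l1]
  · simp [l1, MvPolynomial.support_monomial, hc]

lemma l1_sum_le {d : ℕ} {ι : Type*} (s : Finset ι) (g : ι → MvPolynomial (Fin d) ℂ) :
    l1 (∑ i ∈ s, g i) ≤ ∑ i ∈ s, l1 (g i) :=
  Finset.le_sum_of_subadditive l1 l1_zero.le l1_add_le s g

lemma l1_monomial_mul_le {d : ℕ} (δ : Fin d →₀ ℕ) (c : ℂ) (q : MvPolynomial (Fin d) ℂ) :
    l1 (MvPolynomial.monomial δ c * q) ≤ ‖c‖ * l1 q := by
  conv_lhs => rw [q.as_sum, Finset.mul_sum]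
  refine (l1_sum_le _ _).trans ?_
  rw [l1, Finset.mul_sum]
  refine Finset.sum_le_sum fun α _ => ?_
  rw [MvPolynomial.monomial_mul]
  exact (l1_monomial_le _ _).trans_eq (by simp)

lemma l1_sub_monomial {d : ℕ} (p : MvPolynomial (Fin d) ℂ) (γ : Fin d →₀ ℕ) :
    l1 (p - MvPolynomial.monomial γ (p.coeff γ)) ≤ l1 p - ‖p.coeff γ‖ := by
  set q := p - MvPolynomial.monomial γ (p.coeff γ) with hq
  have hcoeff : ∀ α, α ≠ γ → q.coeff α = p.coeff α := by
    intro α hα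
    have : ¬ γ = α := fun h => hα h.symm
    simp [hq, MvPolynomial.coeff_monomial, this]
  have hγ : q.coeff γ = 0 := by simp [hq]
  have hsupp : q.support ⊆ p.support.erase γ := by
    intro α hα
    rcases eq_or_ne α γ with rfl | h
    · exact absurd hγ (MvPolynomial.mem_support_iff.mp hα)
    · rw [Finset.mem_erase]
      exact ⟨h, MvPolynomial.mem_support_iff.mpr (by rw [← hcoeff α h]; exact MvPolynomial.mem_support_iff.mp hα)⟩
  have h1 : l1 q = ∑ α ∈ p.support.erase γ, ‖p.coeff α‖ := by
    rw [l1_eq_sum_of_subset q hsupp]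
    exact Finset.sum_congr rfl fun α hα => by rw [hcoeff α (Finset.mem_erase.mp hα).1]
  rcases eq_or_ne (p.coeff γ) 0 with h0 | h0
  · rw [h1, h0]
    simp only [norm_zero, sub_zero]
    exact Finset.sum_le_sum_of_subset_of_nonneg (Finset.erase_subset _ _)
      (fun _ _ _ => norm_nonneg _)
  · have hγs : γ ∈ p.support := MvPolynomial.mem_support_iff.mpr h0
    have := Finset.sum_erase_add p.support (fun α => ‖p.coeff α‖) hγs
    rw [h1, l1]
    linarith

lemma abs_coeff_le_l1 {d : ℕ} (p : MvPolynomial (Fin d) ℂ) (γ : Fin d →₀ ℕ) :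
    ‖p.coeff γ‖ ≤ l1 p := by
  rcases eq_or_ne (p.coeff γ) 0 with h0 | h0
  · simp [h0, l1_nonneg]
  · exact Finset.single_le_sum (f := fun α => ‖p.coeff α‖)
      (fun _ _ => norm_nonneg _) (MvPolynomial.mem_support_iff.mpr h0)

open scoped MonomialOrder in
lemma divStep {d k : ℕ} (m : MonomialOrder (Fin d))
    (f : Fin k → MvPolynomial (Fin d) ℂ) (β : Fin k → (Fin d →₀ ℕ))
    (ρ : ℝ) (hρ1 : ρ ≤ 1)
    (hlead : ∀ j, (f j).coeff (β j) = 1)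
    (hmax : ∀ j, ∀ α ∈ (f j).support, α ≠ β j → m.toSyn α < m.toSyn (β j))
    (hsmall : ∀ j, ∑ α ∈ (f j).support.erase (β j), ‖(f j).coeff α‖ ≤ ρ)
    (D : m.syn) (p : MvPolynomial (Fin d) ℂ) (hp : ∀ α ∈ p.support, m.toSyn α ≤ D) :
    ∃ (a : Fin k → MvPolynomial (Fin d) ℂ) (rr : MvPolynomial (Fin d) ℂ),
      p = ∑ i, a i * f i + rr ∧
      l1 rr + (1 - ρ) * ∑ i, l1 (a i) ≤ l1 p ∧
      ∀ γ ∈ rr.support, ∀ j, ¬ β j ≤ γ := by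
  induction D using WellFoundedLT.induction generalizing p with
  | _ D IH =>
  rcases eq_or_ne p 0 with rfl | hp0
  · exact ⟨0, 0, by simp, by simp [l1_zero], by simp⟩
  obtain ⟨γ, hγmem, hγsup⟩ :=
    Finset.exists_mem_eq_sup p.support (MvPolynomial.support_nonempty.mpr hp0) (m.toSyn ·)
  set c := p.coeff γ with hc
  have hc0 : c ≠ 0 := MvPolynomial.mem_support_iff.mp hγmem
  have hγD : m.toSyn γ ≤ D := hp γ hγmem
  have hγmax : ∀ α ∈ p.support, m.toSyn α ≤ m.toSyn γ := fun α hα =>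
    hγsup ▸ Finset.le_sup hα
  have hsub_lt : ∀ α ∈ (p - MvPolynomial.monomial γ c).support, m.toSyn α < m.toSyn γ := by
    intro α hα
    have hne : α ≠ γ := by
      intro h; subst h
      exact MvPolynomial.mem_support_iff.mp hα (by simp [hc])
    have hmem : α ∈ p.support := by
      have hgA : ¬ γ = α := fun h => hne h.symm
      have hco : (p - MvPolynomial.monomial γ c).coeff α = p.coeff α := by
        simp [MvPolynomial.coeff_monomial, hgA]
      exact MvPolynomial.mem_support_iff.mpr
        (by rw [← hco]; exact MvPolynomial.mem_support_iff.mp hα)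
    exact lt_of_le_of_ne (hγmax α hmem) (fun h => hne (m.toSyn.injective h))
  by_cases hdiv : ∃ j, β j ≤ γ
  · -- reduction case
    obtain ⟨j, hj⟩ := hdiv
    set δ := γ - β j with hδ
    have hδβ : δ + β j = γ := tsub_add_cancel_of_le hj
    set g := f j - MvPolynomial.monomial (β j) 1 with hg
    have hgcoeff : ∀ ε, ε ≠ β j → g.coeff ε = (f j).coeff ε := by
      intro ε hε
      have hne' : ¬ β j = ε := fun h => hε h.symm
      simp [hg, MvPolynomial.coeff_monomial, hne']
    have hgβ : g.coeff (β j) = 0 := by simp [hg, hlead j]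
    have hgsupp : g.support ⊆ (f j).support.erase (β j) := by
      intro ε hε
      have hne : ε ≠ β j := by
        intro h; subst h; exact MvPolynomial.mem_support_iff.mp hε hgβ
      refine Finset.mem_erase.mpr ⟨hne, MvPolynomial.mem_support_iff.mpr ?_⟩
      rw [← hgcoeff ε hne]; exact MvPolynomial.mem_support_iff.mp hε
    have hgl1 : l1 g ≤ ρ := by
      refine le_trans ?_ (hsmall j)
      rw [l1_eq_sum_of_subset g hgsupp]
      refine le_of_eq (Finset.sum_congr rfl fun ε hε => ?_)
      rcases eq_or_ne ε (β j) with rfl | hne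
      · exact absurd rfl (Finset.mem_erase.mp hε).1.elim
      · rw [hgcoeff ε hne]
    set p' := p - MvPolynomial.monomial δ c * f j with hp'
    have hp'eq : p' = (p - MvPolynomial.monomial γ c) - MvPolynomial.monomial δ c * g := by
      rw [hp', hg, mul_sub, MvPolynomial.monomial_mul, hδβ, mul_one]
      ring
    have hl1p' : l1 p' ≤ l1 p - (1 - ρ) * ‖c‖ := by
      have h1 : l1 p' ≤ l1 (p - MvPolynomial.monomial γ c)
          + l1 (MvPolynomial.monomial δ c * g) := by
        rw [hp'eq]; exact l1_sub_le _ _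
      have h2 := l1_sub_monomial p γ
      have h3 := l1_monomial_mul_le δ c g
      have h4 : ‖c‖ * l1 g ≤ ‖c‖ * ρ :=
        mul_le_mul_of_nonneg_left hgl1 (norm_nonneg _)
      rw [← hc] at h2
      nlinarith [norm_nonneg c]
    have hp'lt : ∀ α ∈ p'.support, m.toSyn α < m.toSyn γ := by
      intro α hα
      have hcoeff : p'.coeff α ≠ 0 := MvPolynomial.mem_support_iff.mp hα
      rw [hp'eq, MvPolynomial.coeff_sub] at hcoeff
      by_cases h1 : (p - MvPolynomial.monomial γ c).coeff α ≠ 0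
      · exact hsub_lt α (MvPolynomial.mem_support_iff.mpr h1)
      · push_neg at h1
        have h2 : (MvPolynomial.monomial δ c * g).coeff α ≠ 0 := by
          intro h2'; rw [h1, h2', sub_zero] at hcoeff; exact hcoeff rfl
        rw [MvPolynomial.coeff_monomial_mul'] at h2
        by_cases hle : δ ≤ α
        · rw [if_pos hle] at h2
          have hgε : g.coeff (α - δ) ≠ 0 := fun h => h2 (by rw [h, mul_zero])
          have hεsupp := hgsupp (MvPolynomial.mem_support_iff.mpr hgε)
          obtain ⟨hεne, hεmem⟩ := Finset.mem_erase.mp hεsupp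
          have hεlt := hmax j _ hεmem hεne
          have hαeq : δ + (α - δ) = α := add_tsub_cancel_of_le hle
          calc m.toSyn α = m.toSyn δ + m.toSyn (α - δ) := by rw [← map_add, hαeq]
            _ < m.toSyn δ + m.toSyn (β j) := add_lt_add_right hεlt _
            _ = m.toSyn γ := by rw [← map_add, hδβ]
        · rw [if_neg hle] at h2; exact absurd rfl h2
    have key : ∃ (a' : Fin k → MvPolynomial (Fin d) ℂ) (r' : MvPolynomial (Fin d) ℂ),
        p' = ∑ i, a' i * f i + r' ∧
        l1 r' + (1 - ρ) * ∑ i, l1 (a' i) ≤ l1 p' ∧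
        ∀ γ' ∈ r'.support, ∀ j', ¬ β j' ≤ γ' := by
      rcases eq_or_ne p' 0 with h0 | h0
      · exact ⟨0, 0, by simp [h0], by simp [h0, l1_zero], by simp⟩
      · obtain ⟨α₀, hα₀⟩ := MvPolynomial.support_nonempty.mpr h0
        have hbot : (⊥ : m.syn) < D :=
          lt_of_le_of_lt bot_le (lt_of_lt_of_le (hp'lt α₀ hα₀) hγD)
        exact IH (p'.support.sup (m.toSyn ·))
          ((Finset.sup_lt_iff hbot).mpr
            (fun α hα => lt_of_lt_of_le (hp'lt α hα) hγD))
          p' (fun α hα => Finset.le_sup hα)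
    obtain ⟨a', r', heq', hnorm', hrem'⟩ := key
    set aδ : Fin k → MvPolynomial (Fin d) ℂ := Pi.single j (MvPolynomial.monomial δ c) with haδ
    refine ⟨a' + aδ, r', ?_, ?_, hrem'⟩
    · have hsum : ∑ i, (a' + aδ) i * f i
          = (∑ i, a' i * f i) + MvPolynomial.monomial δ c * f j := by
        have hterm : ∀ i, (a' + aδ) i * f i = a' i * f i + aδ i * f i := by
          intro i; simp [add_mul]
        rw [Finset.sum_congr rfl (fun i _ => hterm i), Finset.sum_add_distrib]
        congr 1
        rw [Finset.sum_eq_single_of_mem j (Finset.mem_univ j)]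
        · simp [haδ]
        · intro i _ hne; simp [haδ, Pi.single_eq_of_ne hne]
      rw [hsum]
      have hpp : p = p' + MvPolynomial.monomial δ c * f j := by rw [hp']; ring
      rw [hpp, heq']; ring
    · have hsuml1 : ∑ i, l1 ((a' + aδ) i)
          ≤ (∑ i, l1 (a' i)) + ‖c‖ := by
        have step : ∀ i, l1 ((a' + aδ) i) ≤ l1 (a' i) + l1 (aδ i) := by
          intro i; simpa using l1_add_le (a' i) (aδ i)
        refine le_trans (Finset.sum_le_sum fun i _ => step i) ?_
        rw [Finset.sum_add_distrib]
        gcongr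
        rw [Finset.sum_eq_single_of_mem j (Finset.mem_univ j)]
        · simpa [haδ] using l1_monomial_le δ c
        · intro i _ hne; simp [haδ, Pi.single_eq_of_ne hne, l1_zero]
      have h1ρ : (0:ℝ) ≤ 1 - ρ := by linarith
      have hmul := mul_le_mul_of_nonneg_left hsuml1 h1ρ
      nlinarith
  · -- remainder case
    push_neg at hdiv
    set p' := p - MvPolynomial.monomial γ c with hp'
    have hl1p' : l1 p' ≤ l1 p - ‖c‖ := by
      have h2 := l1_sub_monomial p γ; rw [← hc] at h2; exact h2
    have key : ∃ (a' : Fin k → MvPolynomial (Fin d) ℂ) (r' : MvPolynomial (Fin d) ℂ),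
        p' = ∑ i, a' i * f i + r' ∧
        l1 r' + (1 - ρ) * ∑ i, l1 (a' i) ≤ l1 p' ∧
        ∀ γ' ∈ r'.support, ∀ j', ¬ β j' ≤ γ' := by
      rcases eq_or_ne p' 0 with h0 | h0
      · exact ⟨0, 0, by simp [h0], by simp [h0, l1_zero], by simp⟩
      · obtain ⟨α₀, hα₀⟩ := MvPolynomial.support_nonempty.mpr h0
        have hbot : (⊥ : m.syn) < D :=
          lt_of_le_of_lt bot_le (lt_of_lt_of_le (hsub_lt α₀ hα₀) hγD)
        exact IH (p'.support.sup (m.toSyn ·))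
          ((Finset.sup_lt_iff hbot).mpr
            (fun α hα => lt_of_lt_of_le (hsub_lt α hα) hγD))
          p' (fun α hα => Finset.le_sup hα)
    obtain ⟨a', r', heq', hnorm', hrem'⟩ := key
    refine ⟨a', r' + MvPolynomial.monomial γ c, ?_, ?_, ?_⟩
    · have hpp : p = p' + MvPolynomial.monomial γ c := by rw [hp']; ring
      rw [hpp, heq']; ring
    · have h1 := l1_add_le r' (MvPolynomial.monomial γ c)
      have h2 := l1_monomial_le γ c
      linarith
    · intro γ' hγ' j'
      rcases Finset.mem_union.mp (MvPolynomial.support_add hγ') with h | h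
      · exact hrem' γ' h j'
      · have hγγ : γ' = γ :=
          Finset.mem_singleton.mp (MvPolynomial.support_monomial_subset h)
        rw [hγγ]; exact hdiv j'

open scoped MonomialOrder in
/-- stable division with respect to the ℓ¹ norm, for divisors whose
leading coefficient is 1 and strictly dominates (by `ρ < 1`) the sum of the absolute
values of the remaining coefficients; the remainder has no term divisible by any
leading term, `∑‖aᵢ‖ ≤ (1-ρ)⁻¹‖h‖` and `‖r‖ ≤ ‖h‖`. -/
theorem stmt3 (d k : ℕ) (m : MonomialOrder (Fin d))
    (f : Fin k → MvPolynomial (Fin d) ℂ) (β : Fin k → (Fin d →₀ ℕ))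
    (ρ : ℝ) (hρ0 : 0 < ρ) (hρ1 : ρ < 1)
    (hlead : ∀ j, (f j).coeff (β j) = 1)
    (hmax : ∀ j, ∀ α ∈ (f j).support, α ≠ β j → m.toSyn α < m.toSyn (β j))
    (hsmall : ∀ j, ∑ α ∈ (f j).support.erase (β j), ‖(f j).coeff α‖ ≤ ρ)
    (h : MvPolynomial (Fin d) ℂ) :
    ∃ (a : Fin k → MvPolynomial (Fin d) ℂ) (rr : MvPolynomial (Fin d) ℂ),
      h = ∑ i, a i * f i + rr ∧
      ∑ i, l1 (a i) ≤ (1 - ρ)⁻¹ * l1 h ∧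
      l1 rr ≤ l1 h ∧
      ∀ γ ∈ rr.support, ∀ j, ¬ β j ≤ γ := by
  obtain ⟨a, rr, heq, hnorm, hrem⟩ := divStep m f β ρ hρ1.le hlead hmax hsmall
    (h.support.sup (m.toSyn ·)) h (fun α hα => Finset.le_sup hα)
  have hs : 0 ≤ ∑ i, l1 (a i) := Finset.sum_nonneg fun i _ => l1_nonneg (a i)
  have h1ρ : (0:ℝ) < 1 - ρ := by linarith
  refine ⟨a, rr, heq, ?_, ?_, hrem⟩
  · rw [inv_mul_eq_div, le_div_iff₀ h1ρ]
    nlinarith [l1_nonneg rr]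
  · nlinarith [mul_nonneg h1ρ.le hs]

end
end

section
/- Let f_1, …, f_k ∈ ℂ[z_1,…,z_d] be finitely many polynomials, not all monomials. Then there exist positive reals λ_1, …, λ_d such that the rescaled polynomials g_j(z_1,…,z_d) := f_j(λ_1 z_1, …, λ_d z_d) satisfy: for every j, if g_j = ∑_α c_α z^α with leading term c_β z^β (with respect to the lexicographic order with z_d > ⋯ > z_1 refined by degree), then |c_β| > ∑_{α ≠ β} |c_α|. -/
open MvPolynomial Finset

noncomputable section

/-- the strict graded lexicographic order on multi-indices with `z_d > ⋯ > z_1`,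
i.e. first compare total degrees, then compare lexicographically from the
variable of largest index downward. -/
def dlexLt {d : ℕ} (α β : Fin d →₀ ℕ) : Prop :=
  mdeg α < mdeg β ∨
    (mdeg α = mdeg β ∧ ∃ i : Fin d, α i < β i ∧ ∀ j : Fin d, i < j → α j = β j)

lemma mdeg_eq_sum {d : ℕ} (α : Fin d →₀ ℕ) : mdeg α = ∑ i, α i := by
  unfold mdeg; exact Finsupp.sum_fintype _ _ (fun _ => rfl)

lemma apply_le_mdeg {d : ℕ} (α : Fin d →₀ ℕ) (i : Fin d) : α i ≤ mdeg α := by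
  rw [mdeg_eq_sum]
  exact Finset.single_le_sum (fun _ _ => Nat.zero_le _) (Finset.mem_univ i)

lemma coeff_rescale {d : ℕ} (c : Fin d → ℂ) (p : MvPolynomial (Fin d) ℂ) (α : Fin d →₀ ℕ) :
    coeff α (aeval (fun i => C (c i) * X i) p) = (∏ i, c i ^ α i) * coeff α p := by
  induction p using MvPolynomial.induction_on' with
  | add p q hp hq => rw [map_add, coeff_add, hp, hq, coeff_add, mul_add]
  | monomial β a =>
    rw [aeval_monomial]
    have h1 : (β.prod fun n e => (C (c n) * X n) ^ e)
        = C (β.prod fun n e => c n ^ e) * (β.prod fun n e => (X n : MvPolynomial (Fin d) ℂ) ^ e) := by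
      simp only [Finsupp.prod, mul_pow]
      rw [Finset.prod_mul_distrib]
      congr 1
      rw [map_prod]
      simp [map_pow]
    rw [h1]
    have h2 : (β.prod fun n e => (X n : MvPolynomial (Fin d) ℂ) ^ e) = monomial β 1 := by
      rw [monomial_eq, map_one, one_mul]
    rw [h2, Finsupp.prod_pow]
    simp only [algebraMap_eq, ← C_mul, ← mul_assoc]
    rw [coeff_C_mul, coeff_monomial, coeff_monomial]
    split_ifs with h
    · subst h; ring
    · ring

lemma geom_aux (N : ℕ) (hN : 1 ≤ N) : ∀ n, (∑ m ∈ Finset.range n, N ^ m) * (N - 1) < N ^ n := by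
  intro n
  induction n with
  | zero => simp
  | succ n ih =>
    rw [Finset.sum_range_succ, add_mul, pow_succ]
    have h1 : N ^ n * (N - 1) + N ^ n = N ^ n * N := by
      have h : N - 1 + 1 = N := Nat.succ_pred_eq_of_pos hN
      calc N ^ n * (N - 1) + N ^ n = N ^ n * (N - 1 + 1) := by ring
      _ = N ^ n * N := by rw [h]
    omega

lemma sum_lt_pow {d N : ℕ} (hN : 1 ≤ N) (α : Fin d →₀ ℕ) (hα : ∀ j : Fin d, α j < N) (i : Fin d) :
    ∑ j ∈ univ.filter (fun j => j < i), N ^ (j : ℕ) * α j < N ^ (i : ℕ) := by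
  have h1 : ∑ j ∈ univ.filter (fun j => j < i), N ^ (j : ℕ) * α j
      ≤ ∑ j ∈ univ.filter (fun j => j < i), N ^ (j : ℕ) * (N - 1) := by
    apply Finset.sum_le_sum
    intro j _
    exact Nat.mul_le_mul_left _ (by have := hα j; omega)
  have h2 : ∑ j ∈ univ.filter (fun j => j < i), N ^ (j : ℕ) * (N - 1)
      = ∑ m ∈ Finset.range (i : ℕ), N ^ m * (N - 1) := by
    rw [Finset.sum_filter]
    have h3 : ∀ j : Fin d, (if j < i then N ^ (j:ℕ) * (N-1) else 0)
        = (fun m => if m < (i:ℕ) then N ^ m * (N-1) else 0) (j : ℕ) := by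
      intro j; simp only [Fin.lt_def]
    rw [Finset.sum_congr rfl (fun j _ => h3 j),
      Fin.sum_univ_eq_sum_range (fun m => if m < (i:ℕ) then N ^ m * (N-1) else 0) d]
    rw [← Finset.sum_subset (Finset.range_subset_range.mpr i.isLt.le)
      (fun m _ hm => by rw [if_neg (by simpa using hm)])]
    exact Finset.sum_congr rfl (fun m hm => by rw [if_pos (Finset.mem_range.mp hm)])
  calc ∑ j ∈ univ.filter (fun j => j < i), N ^ (j : ℕ) * α j
      ≤ ∑ m ∈ Finset.range (i : ℕ), N ^ m * (N - 1) := h2 ▸ h1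
    _ = (∑ m ∈ Finset.range (i : ℕ), N ^ m) * (N - 1) := by rw [Finset.sum_mul]
    _ < N ^ (i : ℕ) := geom_aux N hN _

lemma weight_lt {d D : ℕ} (hD : 1 ≤ D) (α β : Fin d →₀ ℕ) (hαD : mdeg α < D)
    (h : dlexLt α β) :
    ∑ i : Fin d, (D ^ d * D + 1 + D ^ (i:ℕ)) * α i < ∑ i : Fin d, (D ^ d * D + 1 + D ^ (i:ℕ)) * β i := by
  set M := D ^ d * D + 1 with hM
  have hsplit : ∀ γ : Fin d →₀ ℕ,
      ∑ i : Fin d, (M + D ^ (i:ℕ)) * γ i = M * mdeg γ + ∑ i : Fin d, D ^ (i:ℕ) * γ i := by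
    intro γ
    rw [mdeg_eq_sum, Finset.mul_sum, ← Finset.sum_add_distrib]
    exact Finset.sum_congr rfl fun i _ => by ring
  rw [hsplit, hsplit]
  rcases h with h | ⟨heq, i, hi, habove⟩
  · have hb : ∑ i : Fin d, D ^ (i:ℕ) * α i ≤ D ^ d * mdeg α := by
      rw [mdeg_eq_sum, Finset.mul_sum]
      apply Finset.sum_le_sum
      intro i _
      exact Nat.mul_le_mul_right _ (Nat.pow_le_pow_right hD i.isLt.le)
    have hb2 : D ^ d * mdeg α < M := by
      have h1 : D ^ d * mdeg α ≤ D ^ d * (D - 1) := Nat.mul_le_mul_left _ (by omega)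
      have h2 : D ^ d * (D - 1) ≤ D ^ d * D := Nat.mul_le_mul_left _ (by omega)
      omega
    have hM1 : M * (mdeg α + 1) ≤ M * mdeg β := Nat.mul_le_mul_left _ (by omega)
    calc M * mdeg α + ∑ i : Fin d, D ^ (i:ℕ) * α i < M * mdeg α + M := by omega
      _ = M * (mdeg α + 1) := by ring
      _ ≤ M * mdeg β := hM1
      _ ≤ M * mdeg β + ∑ i : Fin d, D ^ (i:ℕ) * β i := Nat.le_add_right _ _
  · rw [heq]
    have hαN : ∀ j : Fin d, α j < D := fun j => lt_of_le_of_lt (apply_le_mdeg α j) hαD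
    have key : ∑ i : Fin d, D ^ (i:ℕ) * α i < ∑ i : Fin d, D ^ (i:ℕ) * β i := by
      rw [← Finset.sum_filter_add_sum_filter_not univ (fun j => j < i) (fun j => D ^ (j:ℕ) * α j),
          ← Finset.sum_filter_add_sum_filter_not univ (fun j => j < i) (fun j => D ^ (j:ℕ) * β j)]
      have hA : ∑ j ∈ univ.filter (fun j => j < i), D ^ (j:ℕ) * α j < D ^ (i:ℕ) :=
        sum_lt_pow hD α hαN i
      have hge : ∑ j ∈ univ.filter (fun j => ¬ j < i), D ^ (j:ℕ) * α j + D ^ (i:ℕ)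
          ≤ ∑ j ∈ univ.filter (fun j => ¬ j < i), D ^ (j:ℕ) * β j := by
        have hmem : i ∈ univ.filter (fun j => ¬ j < i) := by simp
        rw [← Finset.add_sum_erase _ _ hmem, ← Finset.add_sum_erase _ _ hmem]
        have heqrest : ∑ j ∈ (univ.filter (fun j => ¬ j < i)).erase i, D ^ (j:ℕ) * α j
            = ∑ j ∈ (univ.filter (fun j => ¬ j < i)).erase i, D ^ (j:ℕ) * β j := by
          apply Finset.sum_congr rfl
          intro j hj
          simp only [Finset.mem_erase, Finset.mem_filter] at hj
          have hij : i < j := lt_of_le_of_ne (not_lt.mp hj.2.2) (Ne.symm hj.1)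
          rw [habove j hij]
        have h5 : D ^ (i:ℕ) * α i + D ^ (i:ℕ) ≤ D ^ (i:ℕ) * β i := by
          have h6 : D ^ (i:ℕ) * (α i + 1) ≤ D ^ (i:ℕ) * β i := Nat.mul_le_mul_left _ hi
          calc D ^ (i:ℕ) * α i + D ^ (i:ℕ) = D ^ (i:ℕ) * (α i + 1) := by ring
            _ ≤ D ^ (i:ℕ) * β i := h6
        rw [heqrest]
        linarith
      set Al := ∑ j ∈ univ.filter (fun j => j < i), D ^ (j:ℕ) * α j with hAl
      set Bl := ∑ j ∈ univ.filter (fun j => j < i), D ^ (j:ℕ) * β j with hBl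
      set Ag := ∑ j ∈ univ.filter (fun j => ¬ j < i), D ^ (j:ℕ) * α j with hAg
      set Bg := ∑ j ∈ univ.filter (fun j => ¬ j < i), D ^ (j:ℕ) * β j with hBg
      omega
    exact Nat.add_lt_add_left key _

/-- given finitely many polynomials, not all monomials, there is a positive
rescaling `z_i ↦ λ_i z_i` after which, for each `j`, the leading coefficient of the
rescaled `g_j` (w.r.t. graded lex with `z_d > ⋯ > z_1`) strictly dominates the sum
of absolute values of the other coefficients. -/
theorem stmt4 (d k : ℕ) (f : Fin k → MvPolynomial (Fin d) ℂ)
    (hnotmono : ¬ ∀ j, ∃ (α : Fin d →₀ ℕ) (c : ℂ), f j = monomial α c) :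
    ∃ lam : Fin d → ℝ, (∀ i, 0 < lam i) ∧
      ∀ j, ∀ g : MvPolynomial (Fin d) ℂ,
        g = aeval (fun i : Fin d => C ((lam i : ℝ) : ℂ) * X i) (f j) →
        ∀ β ∈ g.support, (∀ α ∈ g.support, α ≠ β → dlexLt α β) →
          ∑ α ∈ g.support.erase β, ‖g.coeff α‖ < ‖g.coeff β‖ := by
  classical
  set D : ℕ := 1 + Finset.univ.sup (fun j => (f j).totalDegree) with hDdef
  have hD : 1 ≤ D := Nat.le_add_right 1 _
  have hmdeg : ∀ j, ∀ α ∈ (f j).support, mdeg α < D := by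
    intro j α hα
    have h1 : mdeg α ≤ (f j).totalDegree := MvPolynomial.le_totalDegree hα
    have h2 : (f j).totalDegree ≤ Finset.univ.sup (fun j => (f j).totalDegree) :=
      Finset.le_sup (f := fun j => (f j).totalDegree) (Finset.mem_univ j)
    omega
  set w : Fin d → ℕ := fun i => D ^ d * D + 1 + D ^ (i : ℕ) with hwdef
  set W : (Fin d →₀ ℕ) → ℕ := fun γ => ∑ i : Fin d, w i * γ i with hWdef
  have hWlt : ∀ j, ∀ α ∈ (f j).support, ∀ β : Fin d →₀ ℕ, dlexLt α β → W α < W β := by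
    intro j α hα β hlt
    exact weight_lt hD α β (hmdeg j α hα) hlt
  set S : ℝ := ∑ j, ∑ α ∈ (f j).support, ‖coeff α (f j)‖ with hSdef
  have hS : 0 ≤ S := Finset.sum_nonneg fun j _ =>
    Finset.sum_nonneg fun α _ => norm_nonneg _
  set T : ℝ := ∑ j, ∑ β ∈ (f j).support, (S + 1) / ‖coeff β (f j)‖ with hTdef
  have hT : 0 ≤ T := Finset.sum_nonneg fun j _ =>
    Finset.sum_nonneg fun β _ => div_nonneg (by linarith) (norm_nonneg _)
  set t : ℝ := 1 + T with htdef
  have ht1 : 1 ≤ t := by linarith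
  have ht0 : 0 < t := by linarith
  refine ⟨fun i => t ^ (w i), fun i => pow_pos ht0 _, ?_⟩
  intro j g hg β hβ hdom
  have habs : ∀ α : Fin d →₀ ℕ,
      ‖coeff α g‖ = t ^ (W α) * ‖coeff α (f j)‖ := by
    intro α
    rw [hg, coeff_rescale, norm_mul]
    congr 1
    have hc : (∏ i, ((t ^ w i : ℝ) : ℂ) ^ α i) = (((t ^ (W α) : ℝ)) : ℂ) := by
      push_cast
      rw [← Finset.prod_pow_eq_pow_sum]
      exact Finset.prod_congr rfl fun i _ => by rw [← pow_mul]
    rw [hc, Complex.norm_real, Real.norm_eq_abs, abs_of_nonneg (le_of_lt (pow_pos ht0 _))]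
  have hsupp : g.support = (f j).support := by
    ext α
    simp only [mem_support_iff]
    constructor
    · intro h hc
      apply h
      rw [hg, coeff_rescale, hc, mul_zero]
    · intro h hc
      apply h
      have := habs α
      rw [hc, norm_zero] at this
      have ht' : (0:ℝ) < t ^ (W α) := pow_pos ht0 _
      have := this.symm
      rw [eq_comm] at this
      have h0 : ‖coeff α (f j)‖ = 0 := by
        rcases mul_eq_zero.mp this.symm with h' | h'
        · exact absurd h' (ne_of_gt ht')
        · exact h'
      exact norm_eq_zero.mp h0
  have hβf : β ∈ (f j).support := hsupp ▸ hβ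
  have hcβ : 0 < ‖coeff β (f j)‖ := by
    rw [norm_pos_iff]
    exact mem_support_iff.mp hβf
  -- S < t * |c_β|
  have hSb : S < t * ‖coeff β (f j)‖ := by
    have h1 : (S + 1) / ‖coeff β (f j)‖
        ≤ ∑ β' ∈ (f j).support, (S + 1) / ‖coeff β' (f j)‖ :=
      Finset.single_le_sum (f := fun β' => (S + 1) / ‖coeff β' (f j)‖)
        (fun β' _ => div_nonneg (add_nonneg hS zero_le_one) (norm_nonneg _)) hβf
    have h2 : (∑ β' ∈ (f j).support, (S + 1) / ‖coeff β' (f j)‖) ≤ T :=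
      Finset.single_le_sum
        (f := fun j' => ∑ β' ∈ (f j').support, (S + 1) / ‖coeff β' (f j')‖)
        (fun j' _ => Finset.sum_nonneg fun β' _ =>
          div_nonneg (add_nonneg hS zero_le_one) (norm_nonneg _)) (Finset.mem_univ j)
    have h3 : 1 + (S + 1) / ‖coeff β (f j)‖ ≤ t := by
      rw [htdef]; linarith
    have h4 : (1 + (S + 1) / ‖coeff β (f j)‖) * ‖coeff β (f j)‖
        ≤ t * ‖coeff β (f j)‖ := mul_le_mul_of_nonneg_right h3 hcβ.le
    rw [add_mul, one_mul, div_mul_cancel₀ _ hcβ.ne'] at h4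
    linarith
  have hfS : ∑ α ∈ (f j).support, ‖coeff α (f j)‖ ≤ S :=
    Finset.single_le_sum
      (f := fun j' => ∑ α ∈ (f j').support, ‖coeff α (f j')‖)
      (fun j' _ => Finset.sum_nonneg fun α _ => norm_nonneg _) (Finset.mem_univ j)
  rcases (g.support.erase β).eq_empty_or_nonempty with he | ⟨α₀, hα₀⟩
  · rw [he, Finset.sum_empty, habs β]
    exact mul_pos (pow_pos ht0 _) hcβ
  · have hW : ∀ α ∈ g.support.erase β, W α < W β := by
      intro α hα
      have hαs : α ∈ g.support := Finset.mem_of_mem_erase hα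
      have hαne : α ≠ β := Finset.ne_of_mem_erase hα
      exact hWlt j α (hsupp ▸ hαs) β (hdom α hαs hαne)
    have hWβ : 1 ≤ W β := Nat.lt_of_le_of_lt (Nat.zero_le _) (hW α₀ hα₀)
    calc ∑ α ∈ g.support.erase β, ‖coeff α g‖
        = ∑ α ∈ g.support.erase β, t ^ (W α) * ‖coeff α (f j)‖ :=
          Finset.sum_congr rfl fun α _ => habs α
      _ ≤ ∑ α ∈ g.support.erase β, t ^ (W β - 1) * ‖coeff α (f j)‖ := by
          apply Finset.sum_le_sum
          intro α hα
          exact mul_le_mul_of_nonneg_right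
            (pow_le_pow_right₀ ht1 (by have := hW α hα; omega)) (norm_nonneg _)
      _ = t ^ (W β - 1) * ∑ α ∈ g.support.erase β, ‖coeff α (f j)‖ :=
          (Finset.mul_sum _ _ _).symm
      _ ≤ t ^ (W β - 1) * S := by
          apply mul_le_mul_of_nonneg_left _ (le_of_lt (pow_pos ht0 _))
          refine le_trans ?_ hfS
          apply Finset.sum_le_sum_of_subset_of_nonneg
          · rw [← hsupp]; exact Finset.erase_subset _ _
          · intro α _ _; exact norm_nonneg _
      _ < t ^ (W β - 1) * (t * ‖coeff β (f j)‖) :=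
          mul_lt_mul_of_pos_left hSb (pow_pos ht0 _)
      _ = t ^ (W β) * ‖coeff β (f j)‖ := by
          rw [← mul_assoc, ← pow_succ]
          congr 2
          omega
      _ = ‖coeff β g‖ := (habs β).symm

end
end

section
/- For every ideal I ⊆ ℂ[z_1,…,z_d], there exist positive reals λ_1,…,λ_d such that the ideal J = {f(λ_1 z_1,…,λ_d z_d) : f ∈ I} has the stable division property with respect to the ℓ¹ norm: there exist a finite generating set g_1,…,g_k of J and a constant C such that every h ∈ J can be written h = ∑ a_i g_i with ∑ ‖a_i g_i‖ ≤ C‖h‖. -/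
open MvPolynomial Finset

noncomputable section

namespace SD
variable {d : ℕ}

variable {d : ℕ}

lemma l1_eq_sum {p : MvPolynomial (Fin d) ℂ} {S : Finset (Fin d →₀ ℕ)} (h : p.support ⊆ S) :
    l1 p = ∑ α ∈ S, ‖p.coeff α‖ :=
  Finset.sum_subset h (fun x _ hx => by
    simp [MvPolynomial.notMem_support_iff.mp hx])

lemma l1_nonneg (p : MvPolynomial (Fin d) ℂ) : 0 ≤ l1 p :=
  Finset.sum_nonneg fun _ _ => norm_nonneg _

@[simp] lemma l1_zero : l1 (0 : MvPolynomial (Fin d) ℂ) = 0 := by simp [l1]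

lemma abs_coeff_le_l1 (p : MvPolynomial (Fin d) ℂ) (α : Fin d →₀ ℕ) :
    ‖p.coeff α‖ ≤ l1 p := by
  by_cases h : α ∈ p.support
  · exact Finset.single_le_sum (f := fun β => ‖p.coeff β‖)
      (fun _ _ => norm_nonneg _) h
  · simp [MvPolynomial.notMem_support_iff.mp h, l1_nonneg p]

lemma l1_add_le (p q : MvPolynomial (Fin d) ℂ) : l1 (p + q) ≤ l1 p + l1 q := by
  classical
  rw [l1_eq_sum (S := p.support ∪ q.support) (MvPolynomial.support_add),
    l1_eq_sum (S := p.support ∪ q.support) Finset.subset_union_left,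
    l1_eq_sum (S := p.support ∪ q.support) Finset.subset_union_right, ← Finset.sum_add_distrib]
  exact Finset.sum_le_sum fun α _ => by
    rw [MvPolynomial.coeff_add]; exact norm_add_le _ _

@[simp] lemma l1_neg (p : MvPolynomial (Fin d) ℂ) : l1 (-p) = l1 p := by
  simp [l1, MvPolynomial.support_neg]

lemma l1_sub_le (p q : MvPolynomial (Fin d) ℂ) : l1 (p - q) ≤ l1 p + l1 q := by
  rw [sub_eq_add_neg]
  simpa using l1_add_le p (-q)


variable {d : ℕ}
lemma l1_monomial_mul (δ : Fin d →₀ ℕ) (b : ℂ) (p : MvPolynomial (Fin d) ℂ) :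
    l1 (monomial δ b * p) = ‖b‖ * l1 p := by
  classical
  by_cases hb : b = 0
  · simp [hb, l1]
  have hsupp : (monomial δ b * p).support ⊆ p.support.image (fun α => δ + α) := by
    intro ρ hρ
    have hne := MvPolynomial.mem_support_iff.mp hρ
    rw [MvPolynomial.coeff_monomial_mul'] at hne
    by_cases hle : δ ≤ ρ
    · rw [if_pos hle] at hne
      refine Finset.mem_image.2 ⟨ρ - δ, ?_, add_tsub_cancel_of_le hle⟩
      exact MvPolynomial.mem_support_iff.2 (fun h0 => hne (by simp [h0]))
    · rw [if_neg hle] at hne; exact absurd rfl hne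
  rw [l1_eq_sum hsupp, Finset.sum_image (fun α _ β _ h => by
    simpa using congrArg (fun γ => γ - δ) h)]
  rw [l1, Finset.mul_sum]
  refine Finset.sum_congr rfl fun α _ => ?_
  rw [show (monomial δ b * p).coeff (δ + α) = b * p.coeff α from MvPolynomial.coeff_monomial_mul _ _ _ _,
    norm_mul]

lemma l1_sub_monomial {p : MvPolynomial (Fin d) ℂ} {μ : Fin d →₀ ℕ} (hμ : μ ∈ p.support) :
    l1 (p - monomial μ (p.coeff μ)) = l1 p - ‖p.coeff μ‖ := by
  classical
  set q := p - monomial μ (p.coeff μ) with hq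
  have hcoeff : ∀ ν, q.coeff ν = if ν = μ then 0 else p.coeff ν := by
    intro ν
    rw [hq, MvPolynomial.coeff_sub, MvPolynomial.coeff_monomial]
    split_ifs with h1 h2 h2
    · subst h1; ring
    · exact absurd h1.symm h2
    · exact absurd h2.symm h1
    · ring
  have hsupp : q.support ⊆ p.support := by
    intro ν hν
    have := MvPolynomial.mem_support_iff.mp hν
    rw [hcoeff ν] at this
    by_cases h : ν = μ
    · simp [h] at this
    · rw [if_neg h] at this; exact MvPolynomial.mem_support_iff.2 this
  rw [l1_eq_sum hsupp, ← Finset.sum_erase_add _ _ hμ]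
  rw [l1, ← Finset.sum_erase_add _ (fun ν => ‖p.coeff ν‖) hμ]
  have h1 : q.coeff μ = 0 := by rw [hcoeff]; simp
  have h2 : ∀ ν ∈ p.support.erase μ, ‖q.coeff ν‖ = ‖p.coeff ν‖ := by
    intro ν hν
    rw [hcoeff, if_neg (Finset.mem_erase.mp hν).1]
  rw [Finset.sum_congr rfl h2, h1]
  simp


variable {d : ℕ}

/-- leading monomial w.r.t. lex order (junk value 0 for p = 0) -/
def LM (p : MvPolynomial (Fin d) ℂ) : Fin d →₀ ℕ :=
  if h : p = 0 then 0 else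
    ofLex ((p.support.image (toLex : (Fin d →₀ ℕ) → Lex (Fin d →₀ ℕ))).max'
      ((MvPolynomial.support_nonempty.2 h).image _))

lemma LM_mem {p : MvPolynomial (Fin d) ℂ} (h : p ≠ 0) : LM p ∈ p.support := by
  classical
  rw [LM, dif_neg h]
  have hmem := Finset.max'_mem (p.support.image (toLex : (Fin d →₀ ℕ) → Lex (Fin d →₀ ℕ)))
    ((MvPolynomial.support_nonempty.2 h).image _)
  obtain ⟨α, hα, hEq⟩ := Finset.mem_image.1 hmem
  rw [← hEq]; exact hα

lemma le_LM {p : MvPolynomial (Fin d) ℂ} (h : p ≠ 0) {α : Fin d →₀ ℕ} (hα : α ∈ p.support) :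
    toLex α ≤ toLex (LM p) := by
  classical
  rw [LM, dif_neg h]
  simpa using Finset.le_max' _ _ (Finset.mem_image_of_mem _ hα)

lemma lt_LM {p : MvPolynomial (Fin d) ℂ} (h : p ≠ 0) {α : Fin d →₀ ℕ} (hα : α ∈ p.support)
    (hne : α ≠ LM p) : toLex α < toLex (LM p) :=
  lt_of_le_of_ne (le_LM h hα) (fun hc => hne (toLex.injective hc))

lemma lc_ne_zero {p : MvPolynomial (Fin d) ℂ} (h : p ≠ 0) : p.coeff (LM p) ≠ 0 :=
  MvPolynomial.mem_support_iff.mp (LM_mem h)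

lemma LM_congr {p q : MvPolynomial (Fin d) ℂ} (h : q.support = p.support) : LM q = LM p := by
  classical
  by_cases hp : p = 0
  · have hq : q = 0 := by
      rw [← MvPolynomial.support_eq_empty, h, MvPolynomial.support_eq_empty]; exact hp
    rw [hp, hq]
  · have hq : q ≠ 0 := fun hc => hp (by
      rw [← MvPolynomial.support_eq_empty, ← h, hc, MvPolynomial.support_eq_empty])
    have key : ∀ (s t : Finset (Lex (Fin d →₀ ℕ))) (hs : s.Nonempty) (ht : t.Nonempty),
        s = t → s.max' hs = t.max' ht := by
      rintro s t hs ht rfl; rfl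
    rw [LM, LM, dif_neg hp, dif_neg hq]
    exact congrArg ofLex (key _ _ _ _ (by rw [h]))

lemma lex_add_lt {α β : Fin d →₀ ℕ} (δ : Fin d →₀ ℕ) (h : toLex α < toLex β) :
    toLex (δ + α) < toLex (δ + β) := by
  obtain ⟨j, hpre, hj⟩ := Finsupp.lex_def.1 h
  refine Finsupp.Lex.lt_iff.2 ⟨j, fun i hi => ?_, ?_⟩
  · show (δ + α) i = (δ + β) i
    have := hpre i hi
    simp only [ofLex_toLex] at this
    simp [Finsupp.add_apply, this]
  · show (δ + α) j < (δ + β) j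
    simp only [Finsupp.add_apply]
    exact Nat.add_lt_add_left hj _

lemma lexWF : WellFounded (· < · : Lex (Fin d →₀ ℕ) → Lex (Fin d →₀ ℕ) → Prop) :=
  (Finsupp.Lex.wellFoundedLT).wf




theorem division {k : ℕ} (G : Fin k → MvPolynomial (Fin d) ℂ)
    (hG0 : ∀ i, G i ≠ 0)
    (htail : ∀ i, 2 * l1 (G i) ≤ 3 * ‖(G i).coeff (LM (G i))‖)
    (J : Ideal (MvPolynomial (Fin d) ℂ)) (hGJ : ∀ i, G i ∈ J)
    (hdvd : ∀ r ∈ J, r ≠ 0 → ∃ i, LM (G i) ≤ LM r) :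
    ∀ r ∈ J, ∃ a : Fin k → MvPolynomial (Fin d) ℂ,
      r = ∑ i, a i * G i ∧ ∑ i, l1 (a i * G i) ≤ 3 * l1 r := by
  classical
  have key : ∀ μ : Lex (Fin d →₀ ℕ), ∀ r ∈ J, r ≠ 0 → toLex (LM r) = μ →
      ∃ a : Fin k → MvPolynomial (Fin d) ℂ,
        r = ∑ i, a i * G i ∧ ∑ i, l1 (a i * G i) ≤ 3 * l1 r := by
    intro μ
    induction μ using lexWF.induction with
    | _ μ IH =>
      intro r hrJ hrne hμ
      subst hμ
      obtain ⟨i, hle⟩ := hdvd r hrJ hrne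
      set μi := LM (G i) with hμi
      set ci := (G i).coeff μi with hci
      have hcine : ci ≠ 0 := lc_ne_zero (hG0 i)
      set c := r.coeff (LM r) with hc
      have hcne : c ≠ 0 := lc_ne_zero hrne
      set δ := LM r - μi with hδ
      have hδadd : δ + μi = LM r := tsub_add_cancel_of_le hle
      set e := c / ci with he
      have hec : e * ci = c := div_mul_cancel₀ _ hcine
      have habs : ‖e‖ * ‖ci‖ = ‖c‖ := by
        rw [← norm_mul, hec]
      set T := G i - monomial μi ci with hT
      have hTcoeff : ∀ ν, T.coeff ν = if ν = μi then 0 else (G i).coeff ν := by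
        intro ν
        rw [hT, MvPolynomial.coeff_sub, MvPolynomial.coeff_monomial]
        split_ifs with h1 h2 h2
        · subst h1; ring
        · exact absurd h1.symm h2
        · exact absurd h2.symm h1
        · ring
      have hl1T : l1 T = l1 (G i) - ‖ci‖ := l1_sub_monomial (LM_mem (hG0 i))
      have hl1T' : 2 * l1 T ≤ ‖ci‖ := by
        have := htail i; rw [hl1T]; linarith
      set q := monomial δ e * G i with hq
      have hqsplit : q = monomial (LM r) c + monomial δ e * T := by
        rw [hq, hT, mul_sub, MvPolynomial.monomial_mul, hδadd, hec]
        ring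
      set r' := r - q with hr'
      have hr'J : r' ∈ J := J.sub_mem hrJ (J.mul_mem_left _ (hGJ i))
      -- mass decrease
      have hl1q : l1 q = ‖e‖ * l1 (G i) := l1_monomial_mul _ _ _
      have hpay : 2 * l1 q ≤ 3 * ‖c‖ := by
        have h1 : ‖e‖ * (2 * l1 (G i)) ≤ ‖e‖ * (3 * ‖ci‖) :=
          mul_le_mul_of_nonneg_left (htail i) (norm_nonneg _)
        rw [hl1q]; nlinarith [habs]
      have hstep : l1 r' ≤ l1 r - ‖c‖ / 2 := by
        have h1 : l1 r' ≤ l1 (r - monomial (LM r) c) + l1 (monomial δ e * T) := by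
          have : r' = (r - monomial (LM r) c) - monomial δ e * T := by
            rw [hr', hqsplit]; ring
          rw [this]; exact l1_sub_le _ _
        have h2 : l1 (r - monomial (LM r) c) = l1 r - ‖c‖ := by
          rw [hc]; exact l1_sub_monomial (LM_mem hrne)
        have h3 : l1 (monomial δ e * T) = ‖e‖ * l1 T := l1_monomial_mul _ _ _
        have h4 : ‖e‖ * (2 * l1 T) ≤ ‖e‖ * ‖ci‖ :=
          mul_le_mul_of_nonneg_left hl1T' (norm_nonneg _)
        rw [habs] at h4
        linarith
      -- monomials of r' are strictly smaller
      have hsmall : ∀ ν ∈ r'.support, toLex ν < toLex (LM r) := by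
        intro ν hν
        have hνne := MvPolynomial.mem_support_iff.mp hν
        have : r' = (r - monomial (LM r) c) - monomial δ e * T := by
          rw [hr', hqsplit]; ring
        rw [this, MvPolynomial.coeff_sub] at hνne
        by_cases hcase : (r - monomial (LM r) c).coeff ν ≠ 0
        · have hco : ∀ ρ, (r - monomial (LM r) c).coeff ρ = if ρ = LM r then 0 else r.coeff ρ := by
            intro ρ
            rw [MvPolynomial.coeff_sub, MvPolynomial.coeff_monomial]
            split_ifs with h1 h2 h2
            · subst h1; rw [hc]; ring
            · exact absurd h1.symm h2
            · exact absurd h2.symm h1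
            · ring
          rw [hco ν] at hcase
          by_cases hν2 : ν = LM r
          · simp [hν2] at hcase
          · rw [if_neg hν2] at hcase
            exact lt_LM hrne (MvPolynomial.mem_support_iff.2 hcase) hν2
        · push_neg at hcase
          rw [hcase] at hνne
          simp only [zero_sub, neg_ne_zero] at hνne
          rw [MvPolynomial.coeff_monomial_mul'] at hνne
          by_cases hle2 : δ ≤ ν
          · rw [if_pos hle2] at hνne
            have hTne : T.coeff (ν - δ) ≠ 0 := fun h0 => hνne (by rw [h0]; ring)
            have hne2 : ν - δ ≠ μi := fun h0 => by
              rw [hTcoeff, if_pos h0] at hTne; exact hTne rfl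
            have hmem : ν - δ ∈ (G i).support := by
              rw [hTcoeff, if_neg hne2] at hTne
              exact MvPolynomial.mem_support_iff.2 hTne
            have hlt : toLex (ν - δ) < toLex μi := lt_LM (hG0 i) hmem hne2
            have := lex_add_lt δ hlt
            rw [hδadd] at this
            rwa [add_tsub_cancel_of_le hle2] at this
          · rw [if_neg hle2] at hνne; exact absurd rfl hνne
      -- decompose r' (either zero or by induction)
      have hr'div : ∃ a' : Fin k → MvPolynomial (Fin d) ℂ,
          r' = ∑ j, a' j * G j ∧ ∑ j, l1 (a' j * G j) ≤ 3 * l1 r' := by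
        rcases eq_or_ne r' 0 with h0 | hne'
        · exact ⟨0, by simp [h0], by simp [h0]⟩
        · exact IH (toLex (LM r')) (hsmall _ (LM_mem hne')) r' hr'J hne' rfl
      obtain ⟨a', ha'sum, ha'le⟩ := hr'div
      refine ⟨fun j => (if j = i then monomial δ e else 0) + a' j, ?_, ?_⟩
      · have : ∑ j, ((if j = i then monomial δ e else 0) + a' j) * G j
            = (∑ j, (if j = i then monomial δ e * G j else 0)) + ∑ j, a' j * G j := by
          rw [← Finset.sum_add_distrib]
          refine Finset.sum_congr rfl fun j _ => ?_
          split_ifs with h <;> ring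
        rw [this, Finset.sum_ite_eq' Finset.univ i (fun j => monomial δ e * G j)]
        simp only [Finset.mem_univ, if_true]
        rw [← ha'sum, ← hq, hr']
        ring
      · have hterm : ∀ j, l1 (((if j = i then monomial δ e else 0) + a' j) * G j)
            ≤ (if j = i then l1 q else 0) + l1 (a' j * G j) := by
          intro j
          split_ifs with h
          · subst h
            rw [add_mul, ← hq]
            exact l1_add_le _ _
          · simp
        calc ∑ j, l1 (((if j = i then monomial δ e else 0) + a' j) * G j)
            ≤ ∑ j, ((if j = i then l1 q else 0) + l1 (a' j * G j)) :=
              Finset.sum_le_sum fun j _ => hterm j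
          _ = l1 q + ∑ j, l1 (a' j * G j) := by
              rw [Finset.sum_add_distrib, Finset.sum_ite_eq' Finset.univ i (fun _ => l1 q)]
              simp
          _ ≤ 3 * l1 r := by
              have hcle : ‖c‖ ≤ l1 r := abs_coeff_le_l1 _ _
              linarith
  intro r hrJ
  rcases eq_or_ne r 0 with rfl | hne
  · exact ⟨0, by simp, by simp⟩
  · exact key _ r hrJ hne rfl



lemma dickson (S : Set (Fin d →₀ ℕ)) :
    ∃ F : Finset (Fin d →₀ ℕ), ↑F ⊆ S ∧ ∀ s ∈ S, ∃ b ∈ F, b ≤ s := by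
  classical
  have hpwo : S.IsPWO := Set.isPWO_of_wellQuasiOrderedLE S
  set Min := {x ∈ S | ∀ y ∈ S, ¬ y < x} with hMin
  have hanti : IsAntichain (· ≤ ·) Min := by
    intro a ha b hb hne hle
    exact (hb.2 a ha.1 (lt_of_le_of_ne hle hne)).elim
  have hfin : Min.Finite :=
    hanti.finite_of_partiallyWellOrderedOn (hpwo.mono (fun x hx => hx.1))
  refine ⟨hfin.toFinset, ?_, ?_⟩
  · intro x hx
    exact ((Set.Finite.mem_toFinset hfin).1 hx).1
  · intro s hs
    have hwf : Set.IsWF {x ∈ S | x ≤ s} := hpwo.isWF.mono (fun x hx => hx.1)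
    have hne : {x ∈ S | x ≤ s}.Nonempty := ⟨s, hs, le_rfl⟩
    set m := hwf.min hne with hm
    have hmmem := hwf.min_mem hne
    refine ⟨m, (Set.Finite.mem_toFinset hfin).2 ⟨hmmem.1, ?_⟩, hmmem.2⟩
    intro y hy hlt
    exact hwf.not_lt_min hne ⟨hy, hlt.le.trans hmmem.2⟩ hlt



def wt (D : ℕ) (α : Fin d →₀ ℕ) : ℕ := ∑ i : Fin d, α i * (D + 1) ^ (d - 1 - (i : ℕ))

lemma geom_bound (D m : ℕ) : (∑ e ∈ Finset.range m, D * (D + 1) ^ e) < (D + 1) ^ m := by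
  induction m with
  | zero => simp
  | succ m ih =>
    rw [Finset.sum_range_succ, pow_succ]
    nlinarith

lemma wt_lt {D : ℕ} {α β : Fin d →₀ ℕ} (hα : ∀ j, α j ≤ D)
    (h : toLex α < toLex β) : wt D α < wt D β := by
  classical
  obtain ⟨j, hpre, hj⟩ := Finsupp.lex_def.1 h
  simp only [ofLex_toLex] at hpre hj
  set w : Fin d → ℕ := fun i => (D + 1) ^ (d - 1 - (i : ℕ)) with hw
  have split : ∀ γ : Fin d →₀ ℕ, wt D γ =
      (∑ i ∈ Finset.univ.filter (fun i => i < j), γ i * w i)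
      + (γ j * w j + ∑ i ∈ Finset.univ.filter (fun i => j < i), γ i * w i) := by
    intro γ
    rw [wt, ← Finset.sum_filter_add_sum_filter_not Finset.univ (fun i => i < j)]
    congr 1
    have hins : Finset.univ.filter (fun i : Fin d => ¬ i < j)
        = insert j (Finset.univ.filter (fun i => j < i)) := by
      ext i
      simp only [Finset.mem_filter, Finset.mem_univ, true_and, Finset.mem_insert, not_lt]
      constructor
      · intro hji
        rcases eq_or_lt_of_le hji with h1 | h1
        · exact Or.inl h1.symm
        · exact Or.inr h1
      · rintro (rfl | h1)
        · exact le_rfl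
        · exact h1.le
    rw [hins, Finset.sum_insert (by simp)]
  rw [split α, split β,
    Finset.sum_congr rfl (fun i hi => by rw [hpre i (Finset.mem_filter.1 hi).2])]
  refine Nat.add_lt_add_left ?_ _
  have hkey : (∑ i ∈ Finset.univ.filter (fun i => j < i), α i * w i) < w j := by
    have hinj : ∀ i₁ ∈ Finset.univ.filter (fun i : Fin d => j < i),
        ∀ i₂ ∈ Finset.univ.filter (fun i : Fin d => j < i),
        d - 1 - (i₁ : ℕ) = d - 1 - (i₂ : ℕ) → i₁ = i₂ := by
      intro i₁ _ i₂ _ hEq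
      have h1 := i₁.isLt
      have h2 := i₂.isLt
      exact Fin.ext (by omega)
    calc ∑ i ∈ Finset.univ.filter (fun i => j < i), α i * w i
        ≤ ∑ i ∈ Finset.univ.filter (fun i => j < i), D * w i :=
          Finset.sum_le_sum fun i _ => Nat.mul_le_mul_right _ (hα i)
      _ = ∑ e ∈ (Finset.univ.filter (fun i : Fin d => j < i)).image
            (fun i : Fin d => d - 1 - (i : ℕ)), D * (D + 1) ^ e := by
          rw [Finset.sum_image hinj]
      _ ≤ ∑ e ∈ Finset.range (d - 1 - (j : ℕ)), D * (D + 1) ^ e := by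
          refine Finset.sum_le_sum_of_subset ?_
          intro e he
          obtain ⟨i, hi, rfl⟩ := Finset.mem_image.1 he
          have hji := (Finset.mem_filter.1 hi).2
          have h1 := i.isLt
          have h2 : (j : ℕ) < (i : ℕ) := hji
          exact Finset.mem_range.2 (by omega)
      _ < (D + 1) ^ (d - 1 - (j : ℕ)) := geom_bound _ _
  calc α j * w j + ∑ i ∈ Finset.univ.filter (fun i => j < i), α i * w i
      < α j * w j + w j := Nat.add_lt_add_left hkey _
    _ = (α j + 1) * w j := by ring
    _ ≤ β j * w j := Nat.mul_le_mul_right _ hj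
    _ ≤ β j * w j + ∑ i ∈ Finset.univ.filter (fun i => j < i), β i * w i :=
        Nat.le_add_right _ _



lemma aeval_scale_monomial (c : Fin d → ℂ) (β : Fin d →₀ ℕ) (b : ℂ) :
    aeval (fun i => C (c i) * X i) (monomial β b) = monomial β ((∏ i, c i ^ β i) * b) := by
  rw [aeval_monomial]
  have h1 : (β.prod fun i k => (C (c i) * X i) ^ k)
      = C (∏ i, c i ^ β i) * β.prod fun i k => (X i : MvPolynomial (Fin d) ℂ) ^ k := by
    have : (fun (i : Fin d) (k : ℕ) => (C (c i) * X i : MvPolynomial (Fin d) ℂ) ^ k)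
        = fun i k => C (c i ^ k) * (X i) ^ k := by
      funext i k
      rw [mul_pow, map_pow]
    rw [this, Finsupp.prod_mul, ← map_finsuppProd (C : ℂ →+* MvPolynomial (Fin d) ℂ)]
    congr 2
    exact Finsupp.prod_fintype _ _ (fun i => pow_zero _)
  rw [h1, MvPolynomial.algebraMap_eq, monomial_eq, map_mul]
  ring

lemma coeff_scale (c : Fin d → ℂ) (p : MvPolynomial (Fin d) ℂ) (α : Fin d →₀ ℕ) :
    (aeval (fun i => C (c i) * X i) p).coeff α = (∏ i, c i ^ α i) * p.coeff α := by
  classical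
  conv_lhs => rw [p.as_sum]
  rw [map_sum, MvPolynomial.coeff_sum]
  have : ∀ v ∈ p.support, (aeval (fun i => C (c i) * X i) (monomial v (p.coeff v))).coeff α
      = if v = α then (∏ i, c i ^ α i) * p.coeff v else 0 := by
    intro v _
    rw [aeval_scale_monomial, MvPolynomial.coeff_monomial]
    split_ifs with h
    · subst h; rfl
    · rfl
  rw [Finset.sum_congr rfl this, Finset.sum_ite_eq' p.support α
    (fun v => (∏ i, c i ^ α i) * p.coeff v)]
  by_cases hα : α ∈ p.support
  · rw [if_pos hα]
  · rw [if_neg hα, MvPolynomial.notMem_support_iff.mp hα, mul_zero]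

lemma scale_comp (c c' : Fin d → ℂ) (p : MvPolynomial (Fin d) ℂ) :
    aeval (fun i => C (c i) * X i) (aeval (fun i => C (c' i) * X i) p)
      = aeval (fun i => C (c i * c' i) * X i) p := by
  apply MvPolynomial.ext
  intro α
  rw [coeff_scale, coeff_scale, coeff_scale, ← mul_assoc, ← Finset.prod_mul_distrib]
  congr 1
  refine Finset.prod_congr rfl fun i _ => ?_
  rw [mul_pow]

lemma scale_id (p : MvPolynomial (Fin d) ℂ) :
    aeval (fun i => C (1 : ℂ) * X i) p = p := by
  apply MvPolynomial.ext
  intro α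
  rw [coeff_scale]
  simp

lemma support_scale {c : Fin d → ℂ} (hc : ∀ i, c i ≠ 0) (p : MvPolynomial (Fin d) ℂ) :
    (aeval (fun i => C (c i) * X i) p).support = p.support := by
  ext α
  simp only [MvPolynomial.mem_support_iff, coeff_scale]
  constructor
  · intro h h0; exact h (by rw [h0, mul_zero])
  · intro h
    exact mul_ne_zero (Finset.prod_ne_zero_iff.2 fun i _ => pow_ne_zero _ (hc i)) h

end SD
namespace SD
lemma coeff_sub_monomial (p : MvPolynomial (Fin d) ℂ) (μ ν : Fin d →₀ ℕ) :
    (p - monomial μ (p.coeff μ)).coeff ν = if ν = μ then 0 else p.coeff ν := by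
  rw [MvPolynomial.coeff_sub, MvPolynomial.coeff_monomial]
  split_ifs with h1 h2 h2
  · subst h1; ring
  · exact absurd h1.symm h2
  · exact absurd h2.symm h1
  · ring
end SD

/-- every ideal of `ℂ[z_1,…,z_d]` becomes, after a suitable positive
rescaling of the variables, an ideal with the stable division property for the ℓ¹ norm. -/
theorem stmt6 (d : ℕ) (I : Ideal (MvPolynomial (Fin d) ℂ)) :
    ∃ lam : Fin d → ℝ, (∀ i, 0 < lam i) ∧
    ∃ J : Ideal (MvPolynomial (Fin d) ℂ),
      (J : Set (MvPolynomial (Fin d) ℂ)) =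
        (fun p => aeval (fun i : Fin d => C ((lam i : ℝ) : ℂ) * X i) p) ''
          (I : Set (MvPolynomial (Fin d) ℂ)) ∧
      ∃ (k : ℕ) (g : Fin k → MvPolynomial (Fin d) ℂ) (Cst : ℝ),
        Ideal.span (Set.range g) = J ∧
        ∀ h ∈ J, ∃ a : Fin k → MvPolynomial (Fin d) ℂ,
          h = ∑ i, a i * g i ∧ ∑ i, l1 (a i * g i) ≤ Cst * l1 h := by
  classical
  obtain ⟨F, hFS, hFdom⟩ := SD.dickson ((fun h => SD.LM h) '' {p | p ∈ I ∧ p ≠ 0})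
  set k := F.card with hk
  set bIdx : Fin k → (Fin d →₀ ℕ) := fun i => ((F.equivFin.symm i : {x // x ∈ F}) : Fin d →₀ ℕ)
    with hbIdx
  have hch : ∀ i : Fin k, ∃ p, (p ∈ I ∧ p ≠ 0) ∧ SD.LM p = bIdx i := by
    intro i
    have hmem : bIdx i ∈ ((fun h => SD.LM h) '' {p | p ∈ I ∧ p ≠ 0}) :=
      hFS (Finset.mem_coe.2 (F.equivFin.symm i).2)
    obtain ⟨p, hp, hLM⟩ := hmem
    exact ⟨p, hp, hLM⟩
  choose G' hG' using hch
  have hG'I : ∀ i, G' i ∈ I := fun i => (hG' i).1.1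
  have hG'ne : ∀ i, G' i ≠ 0 := fun i => (hG' i).1.2
  have hG'LM : ∀ i, SD.LM (G' i) = bIdx i := fun i => (hG' i).2
  -- degree bound
  set D : ℕ := Finset.univ.sup (fun i : Fin k =>
    (G' i).support.sup (fun α => Finset.univ.sup (fun j : Fin d => α j))) with hD
  have hDle : ∀ (i : Fin k), ∀ α ∈ (G' i).support, ∀ j : Fin d, α j ≤ D := by
    intro i α hα j
    calc α j ≤ Finset.univ.sup (fun j : Fin d => α j) := Finset.le_sup (Finset.mem_univ j)
      _ ≤ (G' i).support.sup (fun α => Finset.univ.sup (fun j : Fin d => α j)) :=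
          Finset.le_sup (f := fun β : Fin d →₀ ℕ => Finset.univ.sup (fun j : Fin d => β j)) hα
      _ ≤ D := by
          rw [hD]
          exact Finset.le_sup (f := fun i : Fin k =>
            (G' i).support.sup (fun α => Finset.univ.sup (fun j : Fin d => α j)))
            (Finset.mem_univ i)
  -- the scaling factor
  set t : ℝ := 1 + ∑ i : Fin k,
      2 * l1 (G' i) / ‖(G' i).coeff (SD.LM (G' i))‖ with ht
  have hterm_nonneg : ∀ i : Fin k,
      0 ≤ 2 * l1 (G' i) / ‖(G' i).coeff (SD.LM (G' i))‖ := by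
    intro i
    apply div_nonneg
    · linarith [SD.l1_nonneg (G' i)]
    · exact norm_nonneg _
  have ht1 : (1 : ℝ) ≤ t := by
    rw [ht]
    have := Finset.sum_nonneg (fun i (_ : i ∈ Finset.univ) => hterm_nonneg i)
    linarith
  have ht0 : (0 : ℝ) < t := by linarith
  have hti : ∀ i : Fin k, 2 * l1 (G' i) ≤ t * ‖(G' i).coeff (SD.LM (G' i))‖ := by
    intro i
    have habs0 : 0 < ‖(G' i).coeff (SD.LM (G' i))‖ :=
      norm_pos_iff.mpr (SD.lc_ne_zero (hG'ne i))
    have h1 : 2 * l1 (G' i) / ‖(G' i).coeff (SD.LM (G' i))‖ ≤ t := by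
      rw [ht]
      have := Finset.single_le_sum (f := fun i : Fin k =>
        2 * l1 (G' i) / ‖(G' i).coeff (SD.LM (G' i))‖)
        (fun i _ => hterm_nonneg i) (Finset.mem_univ i)
      linarith
    calc 2 * l1 (G' i)
        = (2 * l1 (G' i) / ‖(G' i).coeff (SD.LM (G' i))‖)
          * ‖(G' i).coeff (SD.LM (G' i))‖ := by
          field_simp
      _ ≤ t * ‖(G' i).coeff (SD.LM (G' i))‖ :=
          mul_le_mul_of_nonneg_right h1 habs0.le
  -- the weights
  set lam : Fin d → ℝ := fun i => t ^ ((D + 1) ^ (d - 1 - (i : ℕ))) with hlamdef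
  have hlam : ∀ i, 0 < lam i := fun i => pow_pos ht0 _
  set c : Fin d → ℂ := fun i => ((lam i : ℝ) : ℂ) with hcdef
  have hc : ∀ i, c i ≠ 0 := fun i => Complex.ofReal_ne_zero.2 (hlam i).ne'
  set Lam : (Fin d →₀ ℕ) → ℝ := fun α => ∏ i, lam i ^ α i with hLam
  have hLampos : ∀ α, 0 < Lam α := fun α =>
    Finset.prod_pos fun i _ => pow_pos (hlam i) _
  have hLamwt : ∀ α, Lam α = t ^ (SD.wt D α) := by
    intro α
    rw [hLam, SD.wt]
    simp only
    rw [← Finset.prod_pow_eq_pow_sum]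
    exact Finset.prod_congr rfl fun i _ => by rw [hlamdef, ← pow_mul, Nat.mul_comm]
  have hprodC : ∀ α : Fin d →₀ ℕ, (∏ i, (c i) ^ α i) = ((Lam α : ℝ) : ℂ) := by
    intro α
    rw [hLam]
    push_cast
    rfl
  have hcoeffφ : ∀ (p : MvPolynomial (Fin d) ℂ) (α),
      (aeval (fun i : Fin d => C ((lam i : ℝ) : ℂ) * X i) p).coeff α
        = ((Lam α : ℝ) : ℂ) * p.coeff α := by
    intro p α
    rw [show (fun i : Fin d => C ((lam i : ℝ) : ℂ) * X i) = (fun i : Fin d => C (c i) * X i)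
      from rfl, SD.coeff_scale, hprodC]
  have hφsupp : ∀ p : MvPolynomial (Fin d) ℂ,
      (aeval (fun i : Fin d => C ((lam i : ℝ) : ℂ) * X i) p).support = p.support :=
    fun p => SD.support_scale hc p
  have hφne : ∀ p : MvPolynomial (Fin d) ℂ, p ≠ 0 →
      aeval (fun i : Fin d => C ((lam i : ℝ) : ℂ) * X i) p ≠ 0 := by
    intro p hp hcon
    apply hp
    rw [← MvPolynomial.support_eq_empty, ← hφsupp p, hcon, MvPolynomial.support_eq_empty]
  have hφLM : ∀ p : MvPolynomial (Fin d) ℂ,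
      SD.LM (aeval (fun i : Fin d => C ((lam i : ℝ) : ℂ) * X i) p) = SD.LM p :=
    fun p => SD.LM_congr (hφsupp p)
  -- inverse of the scaling
  have hinv : ∀ p : MvPolynomial (Fin d) ℂ,
      aeval (fun i : Fin d => C ((lam i : ℝ) : ℂ) * X i)
        (aeval (fun i : Fin d => C (c i)⁻¹ * X i) p) = p := by
    intro p
    rw [show (fun i : Fin d => C ((lam i : ℝ) : ℂ) * X i) = (fun i : Fin d => C (c i) * X i)
      from rfl, SD.scale_comp]
    have : (fun i : Fin d => C (c i * (c i)⁻¹) * X i)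
        = (fun i : Fin d => C (1 : ℂ) * X i) := by
      funext i
      rw [mul_inv_cancel₀ (hc i)]
    rw [this, SD.scale_id]
  -- the ideal J
  let J : Ideal (MvPolynomial (Fin d) ℂ) := {
      carrier := (fun p => aeval (fun i : Fin d => C ((lam i : ℝ) : ℂ) * X i) p) ''
        (I : Set (MvPolynomial (Fin d) ℂ)),
      add_mem' := by
        rintro a b ⟨x, hx, rfl⟩ ⟨y, hy, rfl⟩
        exact ⟨x + y, I.add_mem hx hy, map_add _ _ _⟩,
      zero_mem' := ⟨0, I.zero_mem, map_zero _⟩,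
      smul_mem' := by
        rintro r x ⟨y, hy, rfl⟩
        refine ⟨aeval (fun i : Fin d => C (c i)⁻¹ * X i) r * y,
          I.mul_mem_left _ hy, ?_⟩
        simp only [smul_eq_mul, map_mul, hinv r] }
  have hJmem : ∀ x, x ∈ J ↔
      x ∈ (fun p => aeval (fun i : Fin d => C ((lam i : ℝ) : ℂ) * X i) p) ''
        (I : Set (MvPolynomial (Fin d) ℂ)) := fun x => Iff.rfl
  refine ⟨lam, hlam, J, rfl, ?_⟩
  set G : Fin k → MvPolynomial (Fin d) ℂ :=
    fun i => aeval (fun i : Fin d => C ((lam i : ℝ) : ℂ) * X i) (G' i) with hG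
  have hGne : ∀ i, G i ≠ 0 := fun i => hφne _ (hG'ne i)
  have hGJ : ∀ i, G i ∈ J := fun i => (hJmem _).2 ⟨G' i, hG'I i, rfl⟩
  have hGsupp : ∀ i, (G i).support = (G' i).support := fun i => hφsupp _
  have hGLM : ∀ i, SD.LM (G i) = SD.LM (G' i) := fun i => hφLM _
  have hdvd : ∀ r ∈ J, r ≠ 0 → ∃ i, SD.LM (G i) ≤ SD.LM r := by
    intro r hr hrne
    obtain ⟨p, hpI, rfl⟩ := (hJmem r).1 hr
    have hpne : p ≠ 0 := by rintro rfl; exact hrne (map_zero _)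
    have hmem : SD.LM p ∈ (fun h => SD.LM h) '' {p | p ∈ I ∧ p ≠ 0} := ⟨p, ⟨hpI, hpne⟩, rfl⟩
    obtain ⟨b, hbF, hble⟩ := hFdom _ hmem
    refine ⟨F.equivFin ⟨b, hbF⟩, ?_⟩
    have hb : bIdx (F.equivFin ⟨b, hbF⟩) = b := by
      rw [hbIdx]; simp
    rw [hGLM, hG'LM, hb, hφLM]
    exact hble
  have htail : ∀ i, 2 * l1 (G i) ≤ 3 * ‖(G i).coeff (SD.LM (G i))‖ := by
    intro i
    set μ := SD.LM (G' i) with hμ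
    have hLMG : SD.LM (G i) = μ := hGLM i
    have hμsuppG : μ ∈ (G i).support := by rw [hGsupp]; exact SD.LM_mem (hG'ne i)
    set lcG := (G i).coeff μ with hlcG
    set T := G i - monomial μ lcG with hT
    have hl1G : l1 (G i) = l1 T + ‖lcG‖ := by
      have h0 := SD.l1_sub_monomial (p := G i) (μ := μ) hμsuppG
      rw [← hlcG, ← hT] at h0
      linarith
    have hTsub : T.support ⊆ (G' i).support := by
      intro ν hν
      have h1 := MvPolynomial.mem_support_iff.mp hν
      rw [hT, hlcG, SD.coeff_sub_monomial] at h1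
      by_cases h2 : ν = μ
      · rw [if_pos h2] at h1; exact absurd rfl h1
      · rw [if_neg h2] at h1
        rw [← hGsupp]; exact MvPolynomial.mem_support_iff.2 h1
    have habsGcoeff : ∀ α, ‖(G i).coeff α‖
        = Lam α * ‖(G' i).coeff α‖ := by
      intro α
      rw [hG]
      rw [hcoeffφ, norm_mul]
      congr 1
      rw [Complex.norm_real, Real.norm_eq_abs, abs_of_pos (hLampos α)]
    have hkey : t * l1 T ≤ Lam μ * l1 (G' i) := by
      have hrfl : l1 (G' i) = ∑ α ∈ (G' i).support, ‖(G' i).coeff α‖ := rfl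
      rw [SD.l1_eq_sum hTsub, hrfl, Finset.mul_sum, Finset.mul_sum]
      refine Finset.sum_le_sum fun α hα => ?_
      rw [hT, hlcG, SD.coeff_sub_monomial]
      by_cases h2 : α = μ
      · rw [if_pos h2]
        simp only [norm_zero, mul_zero]
        exact mul_nonneg (hLampos μ).le (norm_nonneg _)
      · rw [if_neg h2, habsGcoeff]
        have hwt : SD.wt D α < SD.wt D μ := by
          apply SD.wt_lt (fun j => hDle i α hα j)
          exact SD.lt_LM (hG'ne i) hα h2
        have hpow : t * Lam α ≤ Lam μ := by
          rw [hLamwt, hLamwt]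
          calc t * t ^ SD.wt D α = t ^ (SD.wt D α + 1) := by rw [pow_succ]; ring
            _ ≤ t ^ SD.wt D μ := pow_le_pow_right₀ ht1 (Nat.succ_le_of_lt hwt)
        calc t * (Lam α * ‖(G' i).coeff α‖)
            = (t * Lam α) * ‖(G' i).coeff α‖ := by ring
          _ ≤ Lam μ * ‖(G' i).coeff α‖ :=
            mul_le_mul_of_nonneg_right hpow (norm_nonneg _)
    have habslcG : ‖lcG‖ = Lam μ * ‖(G' i).coeff μ‖ := by
      rw [hlcG]; exact habsGcoeff μ
    have h2T : 2 * l1 T ≤ ‖lcG‖ := by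
      have h1 : t * (2 * l1 T) ≤ t * ‖lcG‖ := by
        calc t * (2 * l1 T) = 2 * (t * l1 T) := by ring
          _ ≤ 2 * (Lam μ * l1 (G' i)) := by linarith [hkey]
          _ = Lam μ * (2 * l1 (G' i)) := by ring
          _ ≤ Lam μ * (t * ‖(G' i).coeff μ‖) := by
              refine mul_le_mul_of_nonneg_left ?_ (hLampos μ).le
              rw [hμ] at *
              exact hti i
          _ = t * ‖lcG‖ := by rw [habslcG]; ring
      exact le_of_mul_le_mul_left h1 ht0
    rw [hLMG, ← hlcG]
    linarith [hl1G, h2T, norm_nonneg lcG]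
  refine ⟨k, G, 3, ?_, ?_⟩
  · apply le_antisymm
    · rw [Ideal.span_le]
      rintro _ ⟨i, rfl⟩
      exact hGJ i
    · intro h hh
      obtain ⟨a, ha, -⟩ := SD.division G hGne htail J hGJ hdvd h hh
      rw [ha]
      exact Ideal.sum_mem _ fun i _ =>
        Ideal.mul_mem_left _ _ (Ideal.subset_span ⟨i, rfl⟩)
  · exact SD.division G hGne htail J hGJ hdvd

end
end

section
/- Every submodule of ℂ[z_1,…,z_d] ⊗ ℂ^r generated by monomials has the stable division property with respect to the H² norm, with stable division constant C = 1: there is a finite set of monomial generators f_1,…,f_k such that every h in the module can be written h = ∑ a_i f_i with ∑_i ‖a_i f_i‖² ≤ ‖h‖². -/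
open MvPolynomial Finset

noncomputable section

/-- a vector-valued monomial `z^α ⊗ ξ` -/
def IsVecMonomial {d r : ℕ} (g : Fin r → MvPolynomial (Fin d) ℂ) : Prop :=
  ∃ (α : Fin d →₀ ℕ) (ξ : Fin r → ℂ), g = fun t => monomial α (ξ t)

/-! ### Auxiliary lemmas -/


lemma daW_nonneg {d : ℕ} (α : Fin d →₀ ℕ) : 0 ≤ daW α := by
  unfold daW; positivity

lemma daNormSq_eq_sum {d : ℕ} (p : MvPolynomial (Fin d) ℂ) (F : Finset (Fin d →₀ ℕ))
    (hF : p.support ⊆ F) :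
    daNormSq p = ∑ β ∈ F, ‖p.coeff β‖ ^ 2 * daW β := by
  refine Finset.sum_subset hF fun β _ hβ => ?_
  simp [MvPolynomial.notMem_support_iff.mp hβ]

lemma coeff_sum_monomial {d : ℕ} (G : Finset (Fin d →₀ ℕ)) (c : (Fin d →₀ ℕ) → ℂ)
    (β : Fin d →₀ ℕ) :
    (∑ γ ∈ G, monomial γ (c γ)).coeff β = if β ∈ G then c β else 0 := by
  classical
  rw [MvPolynomial.coeff_sum]
  simp_rw [MvPolynomial.coeff_monomial]
  exact Finset.sum_ite_eq' G β c

lemma daNormSq_sum_monomial {d : ℕ} (G : Finset (Fin d →₀ ℕ)) (c : (Fin d →₀ ℕ) → ℂ) :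
    daNormSq (∑ β ∈ G, monomial β (c β)) = ∑ β ∈ G, ‖c β‖ ^ 2 * daW β := by
  classical
  have hs : (∑ γ ∈ G, monomial γ (c γ)).support ⊆ G := by
    intro β hβ
    by_contra hb
    exact MvPolynomial.mem_support_iff.mp hβ (by rw [coeff_sum_monomial]; simp [hb])
  rw [daNormSq_eq_sum _ G hs]
  exact Finset.sum_congr rfl fun β hβ => by rw [coeff_sum_monomial]; simp [hβ]

lemma exists_good_vectors (r : ℕ) (K : Submodule ℂ (Fin r → ℂ)) :
    ∃ u : Fin r → (Fin r → ℂ),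
      (∀ t, u t ∈ K) ∧ (∀ η ∈ K, ∑ t, η t • u t = η) ∧
      (∀ t, ∑ t', ‖u t t'‖ ^ 2 ≤ 1) := by
  classical
  set e : (Fin r → ℂ) ≃ₗ[ℂ] EuclideanSpace ℂ (Fin r) := (WithLp.linearEquiv 2 ℂ (Fin r → ℂ)).symm
  set K' : Submodule ℂ (EuclideanSpace ℂ (Fin r)) := K.map (e : (Fin r → ℂ) →ₗ[ℂ] EuclideanSpace ℂ (Fin r))
  haveI : FiniteDimensional ℂ K' := inferInstance
  set P := K'.orthogonalProjectionOnto with hP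
  refine ⟨fun t => e.symm (P (e (Pi.single t 1))), ?_, ?_, ?_⟩
  · intro t
    have : (P (e (Pi.single t 1)) : EuclideanSpace ℂ (Fin r)) ∈ K' := (P (e (Pi.single t 1))).2
    obtain ⟨v, hv, hve⟩ := this
    simpa [← hve] using hv
  · intro η hη
    have hη' : e η ∈ K' := ⟨η, hη, rfl⟩
    have key : ∑ t, η t • (P (e (Pi.single t 1)) : EuclideanSpace ℂ (Fin r)) = e η := by
      have h0 : η = ∑ t, η t • (Pi.single t 1 : Fin r → ℂ) := by
        funext j
        simp [Pi.single_apply, mul_comm]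
      have h1 : e η = ∑ t, η t • e (Pi.single t 1) := by
        conv_lhs => rw [h0]
        rw [map_sum]
        simp
      have h2 : ∑ t, η t • (P (e (Pi.single t 1)) : EuclideanSpace ℂ (Fin r))
          = ((∑ t, η t • P (e (Pi.single t 1)) : K') : EuclideanSpace ℂ (Fin r)) := by
        push_cast; rfl
      rw [h2]
      have h3 : (∑ t, η t • P (e (Pi.single t 1)) : K') = P (e η) := by
        rw [h1, map_sum]
        simp
      rw [h3]; exact congrArg Subtype.val (K'.orthogonalProjectionOnto_mem_subspace_eq_self ⟨e η, hη'⟩)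
    have := congrArg e.symm key
    simpa [map_sum, map_smul] using this
  · intro t
    have h5 : ‖(P (e (Pi.single t 1)) : EuclideanSpace ℂ (Fin r))‖
        = ‖K'.orthogonalProjectionOnto (e (Pi.single t 1))‖ := rfl
    have h1 : ‖(P (e (Pi.single t 1)) : EuclideanSpace ℂ (Fin r))‖ ≤ 1 := by
      have hop := K'.orthogonalProjectionOnto_norm_le
      have h2 := K'.orthogonalProjectionOnto.le_opNorm (e (Pi.single t 1))
      have h3 : ‖e (Pi.single t 1)‖ = 1 := by
        have : e (Pi.single t 1) = EuclideanSpace.single t (1 : ℂ) := rfl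
        rw [this, EuclideanSpace.norm_single]; norm_num
      rw [h5]
      calc ‖K'.orthogonalProjectionOnto (e (Pi.single t 1))‖
          ≤ ‖K'.orthogonalProjectionOnto‖ * ‖e (Pi.single t 1)‖ := h2
        _ ≤ 1 := by rw [h3, mul_one]; exact hop
    have h4 : ∑ t', ‖(e.symm (P (e (Pi.single t 1)))) t'‖ ^ 2
        = ‖(P (e (Pi.single t 1)) : EuclideanSpace ℂ (Fin r))‖ ^ 2 := by
      rw [EuclideanSpace.norm_eq, Real.sq_sqrt (by positivity)]
      refine Finset.sum_congr rfl fun t' _ => ?_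
      rfl
    rw [h4]
    nlinarith [norm_nonneg (P (e (Pi.single t 1)) : EuclideanSpace ℂ (Fin r))]

lemma coeff_mem {d r m : ℕ} (α : Fin m → (Fin d →₀ ℕ)) (ξ : Fin m → (Fin r → ℂ))
    {h : Fin r → MvPolynomial (Fin d) ℂ}
    (hh : h ∈ Submodule.span (MvPolynomial (Fin d) ℂ)
      (Set.range fun j => fun t => monomial (α j) (ξ j t))) :
    ∀ β : Fin d →₀ ℕ,
      (fun t => (h t).coeff β) ∈ Submodule.span ℂ (ξ '' {j | α j ≤ β}) := by
  classical
  have mono : ∀ {γ β : Fin d →₀ ℕ}, γ ≤ β →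
      Submodule.span ℂ (ξ '' {j | α j ≤ γ}) ≤ Submodule.span ℂ (ξ '' {j | α j ≤ β}) :=
    fun hγβ => Submodule.span_mono (Set.image_mono fun j hj => le_trans hj hγβ)
  induction hh using Submodule.span_induction with
  | mem x hx =>
    intro β
    obtain ⟨j, rfl⟩ := hx
    by_cases hj : α j = β
    · have : (fun t => ((fun t => monomial (α j) (ξ j t)) t).coeff β) = ξ j := by
        funext t; simp [MvPolynomial.coeff_monomial, hj]
      rw [this]
      exact Submodule.subset_span ⟨j, le_of_eq hj, rfl⟩
    · have : (fun t => ((fun t => monomial (α j) (ξ j t)) t).coeff β) = 0 := by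
        funext t; simp [MvPolynomial.coeff_monomial, hj]
      rw [this]
      exact Submodule.zero_mem _
  | zero =>
    intro β
    have : (fun t => ((0 : Fin r → MvPolynomial (Fin d) ℂ) t).coeff β)
        = (0 : Fin r → ℂ) := by funext t; simp
    rw [this]; exact Submodule.zero_mem _
  | add x y hx hy ihx ihy =>
    intro β
    have : (fun t => ((x + y) t).coeff β)
        = (fun t => (x t).coeff β) + fun t => (y t).coeff β := by
      funext t; simp
    rw [this]
    exact Submodule.add_mem _ (ihx β) (ihy β)
  | smul a x hx ih =>
    intro β
    have key : (fun t => ((a • x) t).coeff β)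
        = ∑ p ∈ Finset.HasAntidiagonal.antidiagonal β, (a.coeff p.1) • fun t => (x t).coeff p.2 := by
      funext t
      simp only [Pi.smul_apply, smul_eq_mul, MvPolynomial.coeff_mul, Finset.sum_apply,
        Pi.smul_apply, smul_eq_mul]
    rw [key]
    refine Submodule.sum_mem _ fun p hp => Submodule.smul_mem _ _ ?_
    have hle : p.2 ≤ β := by
      have h1 := Finset.HasAntidiagonal.mem_antidiagonal.mp hp
      calc p.2 ≤ p.1 + p.2 := le_add_self
        _ = β := h1
    exact mono hle (ih p.2)

lemma monomial_mem {d r m : ℕ} (α : Fin m → (Fin d →₀ ℕ)) (ξ : Fin m → (Fin r → ℂ))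
    (γ : Fin d →₀ ℕ) {v : Fin r → ℂ}
    (hv : v ∈ Submodule.span ℂ (ξ '' {j | α j ≤ γ})) :
    (fun t => monomial γ (v t)) ∈ Submodule.span (MvPolynomial (Fin d) ℂ)
      (Set.range fun j => fun t => monomial (α j) (ξ j t)) := by
  classical
  induction hv using Submodule.span_induction with
  | mem x hx =>
    obtain ⟨j, hj, rfl⟩ := hx
    have key : (fun t => monomial γ (ξ j t))
        = (monomial (γ - α j) (1 : ℂ) : MvPolynomial (Fin d) ℂ)
          • fun t => monomial (α j) (ξ j t) := by
      have hγ : (γ - α j) + (α j) = γ := tsub_add_cancel_of_le hj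
      funext t
      rw [Pi.smul_apply, smul_eq_mul, MvPolynomial.monomial_mul, one_mul, hγ]
    rw [key]
    exact Submodule.smul_mem _ _ (Submodule.subset_span ⟨j, rfl⟩)
  | zero =>
    have : (fun t => monomial γ ((0 : Fin r → ℂ) t))
        = (0 : Fin r → MvPolynomial (Fin d) ℂ) := by funext t; simp
    rw [this]; exact Submodule.zero_mem _
  | add x y hx hy ihx ihy =>
    have : (fun t => monomial γ ((x + y) t))
        = (fun t => monomial γ (x t)) + fun t => monomial γ (y t) := by
      funext t; simp
    rw [this]; exact Submodule.add_mem _ ihx ihy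
  | smul c x hx ih =>
    have : (fun t => monomial γ ((c • x) t))
        = (C c : MvPolynomial (Fin d) ℂ) • fun t => monomial γ (x t) := by
      funext t
      simp [MvPolynomial.C_mul_monomial]
    rw [this]; exact Submodule.smul_mem _ _ ih

set_option maxHeartbeats 1600000 in
/-- every submodule of `ℂ[z]^r` generated by monomials has the stable division
property with constant `C = 1` for the Drury–Arveson norm. -/
theorem stmt9 (d r : ℕ) (S : Set (Fin r → MvPolynomial (Fin d) ℂ))
    (hS : ∀ g ∈ S, IsVecMonomial g) :
    ∃ (k : ℕ) (f : Fin k → (Fin r → MvPolynomial (Fin d) ℂ)),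
      (∀ i, IsVecMonomial (f i)) ∧
      Submodule.span (MvPolynomial (Fin d) ℂ) (Set.range f) =
        Submodule.span (MvPolynomial (Fin d) ℂ) S ∧
      ∀ h ∈ Submodule.span (MvPolynomial (Fin d) ℂ) S,
        ∃ a : Fin k → MvPolynomial (Fin d) ℂ,
          h = ∑ i, a i • f i ∧ ∑ i, vNormSq (a i • f i) ≤ vNormSq h := by
  classical
  -- Step 1: a finite subset of S with the same span
  have fg : (Submodule.span (MvPolynomial (Fin d) ℂ) S).FG := IsNoetherian.noetherian _
  obtain ⟨Gen, hGen⟩ := fg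
  have hGenS : ∀ x ∈ Gen, x ∈ Submodule.span (MvPolynomial (Fin d) ℂ) S := fun x hx =>
    hGen ▸ Submodule.subset_span hx
  choose! T hT1 hT2 using fun x hx => Submodule.mem_span_finite_of_mem_span (hGenS x hx)
  set S₀ : Finset (Fin r → MvPolynomial (Fin d) ℂ) := Gen.biUnion T with hS₀
  have hsub : (S₀ : Set (Fin r → MvPolynomial (Fin d) ℂ)) ⊆ S := by
    intro x hx
    obtain ⟨y, hy, hxy⟩ := Finset.mem_biUnion.mp hx
    exact hT1 y hy hxy
  have hspan0 : Submodule.span (MvPolynomial (Fin d) ℂ) (S₀ : Set _)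
      = Submodule.span (MvPolynomial (Fin d) ℂ) S := by
    refine le_antisymm (Submodule.span_mono hsub) ?_
    rw [← hGen]
    refine Submodule.span_le.mpr fun x hx => ?_
    refine Submodule.span_mono ?_ (hT2 x hx)
    exact_mod_cast Finset.coe_subset.mpr (Finset.subset_biUnion_of_mem T hx)
  -- Step 2: enumerate the finite set and extract monomial data
  set m := S₀.card with hm
  set gfun : Fin m → (Fin r → MvPolynomial (Fin d) ℂ) := fun i => (S₀.equivFin.symm i : _) with hgfun
  have hrange : Set.range gfun = (S₀ : Set _) := by
    ext x
    constructor
    · rintro ⟨i, rfl⟩; exact (S₀.equivFin.symm i).2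
    · intro hx; exact ⟨S₀.equivFin ⟨x, hx⟩, by simp [hgfun]⟩
  have hmono : ∀ j, IsVecMonomial (gfun j) := fun j =>
    hS _ (hsub (hrange ▸ ⟨j, rfl⟩))
  choose α ξ hαξ using hmono
  have hgG : gfun = fun j => fun t => monomial (α j) (ξ j t) := funext hαξ
  have hspan1 : Submodule.span (MvPolynomial (Fin d) ℂ)
        (Set.range fun j => fun t => monomial (α j) (ξ j t))
      = Submodule.span (MvPolynomial (Fin d) ℂ) S := by
    rw [← hgG, hrange, hspan0]
  -- Step 3: per-degree projections
  choose u hu1 hu2 hu3 using fun Tt : Finset (Fin m) =>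
    exists_good_vectors r (Submodule.span ℂ (ξ '' {j | α j ≤ Tt.sup α}))
  set f' : Finset (Fin m) × Fin r → (Fin r → MvPolynomial (Fin d) ℂ) :=
    fun p => fun t' => monomial (p.1.sup α) (u p.1 p.2 t') with hf'
  set eqv : Fin (Fintype.card (Finset (Fin m) × Fin r)) ≃ (Finset (Fin m) × Fin r) :=
    (Fintype.equivFin (Finset (Fin m) × Fin r)).symm with heqv
  refine ⟨Fintype.card (Finset (Fin m) × Fin r), f' ∘ eqv, ?_, ?_, ?_⟩
  · exact fun i => ⟨(eqv i).1.sup α, u (eqv i).1 (eqv i).2, rfl⟩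
  · -- span equality
    have hr : Set.range (f' ∘ eqv) = Set.range f' := (Equiv.surjective eqv).range_comp f'
    rw [hr, ← hspan1]
    refine le_antisymm (Submodule.span_le.mpr ?_) (Submodule.span_le.mpr ?_)
    · rintro _ ⟨⟨Tt, t⟩, rfl⟩
      exact monomial_mem α ξ _ (hu1 Tt t)
    · rintro _ ⟨j, rfl⟩
      have hξ : ξ j ∈ Submodule.span ℂ (ξ '' {j' | α j' ≤ ({j} : Finset (Fin m)).sup α}) := by
        rw [Finset.sup_singleton]
        exact Submodule.subset_span ⟨j, show α j ≤ α j from le_rfl, rfl⟩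
      have hsum := hu2 {j} (ξ j) hξ
      have key : (fun t => monomial (α j) (ξ j t))
          = ∑ t, (C (ξ j t) : MvPolynomial (Fin d) ℂ) • f' ({j}, t) := by
        funext t'
        rw [Finset.sum_apply]
        simp only [hf', Pi.smul_apply, smul_eq_mul, MvPolynomial.C_mul_monomial,
          Finset.sup_singleton]
        rw [← map_sum]
        congr 1
        have := congrFun hsum t'
        rw [Finset.sum_apply] at this
        simpa [Finset.sup_singleton] using this.symm
      show (fun t => monomial (α j) (ξ j t))
          ∈ Submodule.span (MvPolynomial (Fin d) ℂ) (Set.range f')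
      rw [key]
      exact Submodule.sum_mem _ fun t _ =>
        Submodule.smul_mem _ _ (Submodule.subset_span ⟨({j}, t), rfl⟩)
  · -- stable division
    intro h hh
    rw [← hspan1] at hh
    have hη := coeff_mem α ξ hh
    set F : Finset (Fin d →₀ ℕ) := Finset.univ.biUnion (fun t => (h t).support) with hF
    have hsupp : ∀ t, (h t).support ⊆ F := by
      intro t β hβ
      rw [hF]
      exact Finset.mem_biUnion.mpr ⟨t, Finset.mem_univ t, hβ⟩
    set Tof : (Fin d →₀ ℕ) → Finset (Fin m) := fun β => Finset.univ.filter fun j => α j ≤ β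
      with hTof
    have hTle : ∀ β, (Tof β).sup α ≤ β := fun β =>
      Finset.sup_le fun j hj => (Finset.mem_filter.mp hj).2
    have hηT : ∀ β, (fun t => (h t).coeff β)
        ∈ Submodule.span ℂ (ξ '' {j | α j ≤ (Tof β).sup α}) := by
      intro β
      refine Submodule.span_mono ?_ (hη β)
      rintro _ ⟨j, hj, rfl⟩
      exact ⟨j, show α j ≤ (Tof β).sup α from
        Finset.le_sup (Finset.mem_filter.mpr ⟨Finset.mem_univ j, hj⟩), rfl⟩
    set a' : Finset (Fin m) × Fin r → MvPolynomial (Fin d) ℂ := fun p =>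
      ∑ β ∈ F.filter (fun β => Tof β = p.1), monomial (β - p.1.sup α) ((h p.2).coeff β)
      with ha'
    have comp : ∀ (Tt : Finset (Fin m)) (t t' : Fin r),
        (a' (Tt, t) • f' (Tt, t)) t'
        = ∑ β ∈ F.filter (fun β => Tof β = Tt), monomial β ((h t).coeff β * u Tt t t') := by
      intro Tt t t'
      show a' (Tt, t) * monomial (Tt.sup α) (u Tt t t') = _
      rw [ha', Finset.sum_mul]
      refine Finset.sum_congr rfl fun β hβ => ?_
      have hT := (Finset.mem_filter.mp hβ).2
      have hle : Tt.sup α ≤ β := hT ▸ hTle β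
      rw [MvPolynomial.monomial_mul, tsub_add_cancel_of_le hle]
    have hasum : ∀ t0 : Fin r, h t0 = ∑ β ∈ F, monomial β ((h t0).coeff β) := by
      intro t0
      conv_lhs => rw [(h t0).as_sum]
      exact Finset.sum_subset (hsupp t0) fun β _ hβ => by
        rw [MvPolynomial.notMem_support_iff.mp hβ, map_zero]
    refine ⟨a' ∘ eqv, ?_, ?_⟩
    · have hsumI : ∑ i, (a' ∘ eqv) i • (f' ∘ eqv) i = ∑ p, a' p • f' p :=
        Equiv.sum_comp eqv (fun p => a' p • f' p)
      rw [hsumI]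
      funext t'
      rw [Finset.sum_apply, Fintype.sum_prod_type]
      have step1 : ∀ Tt : Finset (Fin m), ∀ t : Fin r,
          (a' (Tt, t) • f' (Tt, t)) t'
          = ∑ β ∈ F.filter (fun β => Tof β = Tt), monomial β ((h t).coeff β * u Tt t t') :=
        fun Tt t => comp Tt t t'
      calc h t' = ∑ β ∈ F, monomial β ((h t').coeff β) := hasum t'
        _ = ∑ Tt : Finset (Fin m), ∑ β ∈ F.filter (fun β => Tof β = Tt),
              monomial β ((h t').coeff β) := (Finset.sum_fiberwise F Tof _).symm
        _ = ∑ Tt : Finset (Fin m), ∑ β ∈ F.filter (fun β => Tof β = Tt),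
              ∑ t, monomial β ((h t).coeff β * u Tt t t') := by
            refine Finset.sum_congr rfl fun Tt _ => Finset.sum_congr rfl fun β hβ => ?_
            have hT := (Finset.mem_filter.mp hβ).2
            rw [← map_sum]
            congr 1
            have hb := hu2 Tt _ (hT ▸ hηT β)
            have := congrFun hb t'
            rw [Finset.sum_apply] at this
            simpa using this.symm
        _ = ∑ Tt : Finset (Fin m), ∑ t,
              ∑ β ∈ F.filter (fun β => Tof β = Tt), monomial β ((h t).coeff β * u Tt t t') := by
            exact Finset.sum_congr rfl fun Tt _ => Finset.sum_comm
        _ = ∑ Tt : Finset (Fin m), ∑ t, (a' (Tt, t) • f' (Tt, t)) t' := by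
            exact Finset.sum_congr rfl fun Tt _ => Finset.sum_congr rfl fun t _ =>
              (step1 Tt t).symm
    · have hsumI : ∑ i, vNormSq ((a' ∘ eqv) i • (f' ∘ eqv) i)
          = ∑ p : Finset (Fin m) × Fin r, vNormSq (a' p • f' p) :=
        Equiv.sum_comp eqv (fun p => vNormSq (a' p • f' p))
      rw [hsumI]
      have normTt : ∀ (Tt : Finset (Fin m)) (t : Fin r),
          vNormSq (a' (Tt, t) • f' (Tt, t))
          ≤ ∑ β ∈ F.filter (fun β => Tof β = Tt), ‖(h t).coeff β‖ ^ 2 * daW β := by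
        intro Tt t
        have e1 : vNormSq (a' (Tt, t) • f' (Tt, t))
            = ∑ t', ∑ β ∈ F.filter (fun β => Tof β = Tt),
                ‖(h t).coeff β * u Tt t t'‖ ^ 2 * daW β := by
          unfold vNormSq
          refine Finset.sum_congr rfl fun t' _ => ?_
          rw [comp Tt t t', daNormSq_sum_monomial]
        rw [e1, Finset.sum_comm]
        refine Finset.sum_le_sum fun β hβ => ?_
        have e2 : ∑ t', ‖(h t).coeff β * u Tt t t'‖ ^ 2 * daW β
            = (‖(h t).coeff β‖ ^ 2 * daW β) * ∑ t', ‖u Tt t t'‖ ^ 2 := by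
          rw [Finset.mul_sum]
          refine Finset.sum_congr rfl fun t' _ => ?_
          rw [norm_mul, mul_pow]
          ring
        rw [e2]
        have hle1 := hu3 Tt t
        have hnn : 0 ≤ ‖(h t).coeff β‖ ^ 2 * daW β := by
          have := daW_nonneg β; positivity
        calc (‖(h t).coeff β‖ ^ 2 * daW β) * ∑ t', ‖u Tt t t'‖ ^ 2
            ≤ (‖(h t).coeff β‖ ^ 2 * daW β) * 1 :=
              mul_le_mul_of_nonneg_left hle1 hnn
          _ = ‖(h t).coeff β‖ ^ 2 * daW β := mul_one _
      calc ∑ p : Finset (Fin m) × Fin r, vNormSq (a' p • f' p)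
          = ∑ Tt : Finset (Fin m), ∑ t, vNormSq (a' (Tt, t) • f' (Tt, t)) := by
            rw [Fintype.sum_prod_type]
        _ ≤ ∑ Tt : Finset (Fin m), ∑ t, ∑ β ∈ F.filter (fun β => Tof β = Tt),
              ‖(h t).coeff β‖ ^ 2 * daW β := by
            refine Finset.sum_le_sum fun Tt _ => Finset.sum_le_sum fun t _ => normTt Tt t
        _ = ∑ t, ∑ Tt : Finset (Fin m), ∑ β ∈ F.filter (fun β => Tof β = Tt),
              ‖(h t).coeff β‖ ^ 2 * daW β := Finset.sum_comm
        _ = ∑ t, ∑ β ∈ F, ‖(h t).coeff β‖ ^ 2 * daW β := by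
            refine Finset.sum_congr rfl fun t _ => ?_
            exact Finset.sum_fiberwise F Tof _
        _ = vNormSq h := by
            unfold vNormSq
            exact Finset.sum_congr rfl fun t _ => (daNormSq_eq_sum (h t) F (hsupp t)).symm

end
end
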